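/- arXiv:1404.1225 — 4 statements merged into one kernel-verified Lean document; each statement's English description precedes it below -/
import Mathlib

section
/- If two contexts C and D have a common upper bound with respect to ⊑, then they have a least upper bound C ⊔ D (the merge of C and D). -/
/-- First-order terms over signature `F` and variables `V`. -/
inductive Tm (F V : Type) : Type
  | var : V → Tm F V
  | app : F → List (Tm F V) → Tm F V

namespace Tm

variable {F V G : Type}

/-- Applying a substitution to a term. -/
def subst (σ : V → Tm F V) : Tm F V → Tm F V
  | var x => σ x
  | app f ts => app f (ts.attach.map (fun ⟨t, _⟩ => subst σ t))
  decreasing_by · simp only [Tm.app.sizeOf_spec]; have := List.sizeOf_lt_of_mem ‹_›; omega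

/-- List of (occurrences of) variables of a term. -/
def vars : Tm F V → List V
  | var x => [x]
  | app _ ts => ts.attach.flatMap (fun ⟨t, _⟩ => vars t)
  decreasing_by · simp only [Tm.app.sizeOf_spec]; have := List.sizeOf_lt_of_mem ‹_›; omega

/-- Renaming the function symbols of a term. -/
def mapF (g : F → G) : Tm F V → Tm G V
  | var x => var x
  | app f ts => app (g f) (ts.attach.map (fun ⟨t, _⟩ => mapF g t))
  decreasing_by · simp only [Tm.app.sizeOf_spec]; have := List.sizeOf_lt_of_mem ‹_›; omega

/-- The subterm at a position (a list of argument indices), if the position exists. -/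
def sub : List Nat → Tm F V → Option (Tm F V)
  | [], t => some t
  | _ :: _, var _ => none
  | i :: p, app _ ts => ts[i]?.bind (sub p)

/-- Replacing the subterm at a position by another term. -/
def repl : List Nat → Tm F V → Tm F V → Tm F V
  | [], _, u => u
  | _ :: _, var x, _ => var x
  | i :: p, app f ts, u =>
      app f (match ts[i]? with
             | some t => ts.set i (repl p t u)
             | none => ts)

end Tm

/-- A rewrite rule: a pair of terms. -/
structure Rule (F V : Type) where
  lhs : Tm F V
  rhs : Tm F V

/-- The usual variable conditions on a rewrite rule: the left-hand side is
not a variable and all variables of the right-hand side occur in the left-hand side. -/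
def WfRule {F V : Type} (ρ : Rule F V) : Prop :=
  (∀ x, ρ.lhs ≠ .var x) ∧ ∀ x, x ∈ ρ.rhs.vars → x ∈ ρ.lhs.vars

/-- `s` rewrites to `t` at position `p` using rule `ρ`. -/
def StepAt {F V : Type} (p : List Nat) (ρ : Rule F V) (s t : Tm F V) : Prop :=
  ∃ σ : V → Tm F V, Tm.sub p s = some (Tm.subst σ ρ.lhs) ∧ t = Tm.repl p s (Tm.subst σ ρ.rhs)

/-- The rewrite relation of a TRS (set of rules). -/
def Step {F V : Type} (R : Set (Rule F V)) (s t : Tm F V) : Prop :=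
  ∃ ρ ∈ R, ∃ p, StepAt p ρ s t

/-- `l` matches `t`: some substitution instance of `l` equals `t`. -/
def Matches {F V : Type} (l t : Tm F V) : Prop :=
  ∃ σ : V → Tm F V, Tm.subst σ l = t

/-- Reflexive-transitive closure of rewriting. -/
abbrev Steps {F V : Type} (R : Set (Rule F V)) : Tm F V → Tm F V → Prop :=
  Relation.ReflTransGen (Step R)

/-- Confluence on a set of terms. -/
def ConfluentOn {F V : Type} (R : Set (Rule F V)) (T : Set (Tm F V)) : Prop :=
  ∀ s ∈ T, ∀ t u, Steps R s t → Steps R s u → ∃ v, Steps R t v ∧ Steps R u v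

/-- Confluence (on all terms). -/
def Confluent {F V : Type} (R : Set (Rule F V)) : Prop :=
  ConfluentOn R Set.univ

/-- A relation is terminating if it admits no infinite sequences, i.e., its
inverse is well-founded. -/
def TerminatingRel {α : Type} (r : α → α → Prop) : Prop :=
  WellFounded (fun a b => r b a)

/-- One step of `A` relative to `B`: `→B* · →A · →B*`. -/
def RelStep {F V : Type} (A B : Set (Rule F V)) (s t : Tm F V) : Prop :=
  ∃ s' t', Steps B s s' ∧ Step A s' t' ∧ Steps B t' t

/-- Relative termination of `A/B`. -/
def RelTerminating {F V : Type} (A B : Set (Rule F V)) : Prop :=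
  TerminatingRel (RelStep A B)
/-- Contexts over `F` and `V`: terms over the signature extended with a
fresh hole constant (`Sum.inr ()`). -/
abbrev Ctx (F V : Type) := Tm (F ⊕ Unit) V

/-- The empty context (the hole). -/
def hole {F V : Type} : Ctx F V := Tm.app (Sum.inr ()) []

/-- A context with no holes, i.e., a term. -/
def noHole {F V : Type} (C : Ctx F V) : Prop :=
  ∀ p : List Nat, Tm.sub p C ≠ some (hole (F := F) (V := V))

/-- `p` is a position of `C` whose root is a function symbol (not a hole, not a variable). -/
def funPos {F V : Type} (p : List Nat) (C : Ctx F V) : Prop :=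
  ∃ (f : F) (ts : List (Ctx F V)), Tm.sub p C = some (Tm.app (Sum.inl f) ts)

/-- The partial order `⊑` on contexts: the smallest reflexive transitive
monotone relation with `hole ⊑ C` for every context `C`. -/
inductive CLe {F V : Type} : Ctx F V → Ctx F V → Prop
  | refl (C : Ctx F V) : CLe C C
  | hole (C : Ctx F V) : CLe hole C
  | trans {C D E : Ctx F V} : CLe C D → CLe D E → CLe C E
  | mono (f : F ⊕ Unit) {Cs Ds : List (Ctx F V)} :
      List.Forall₂ CLe Cs Ds → CLe (Tm.app f Cs) (Tm.app f Ds)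

/-- `M` is the merge (supremum w.r.t. `⊑`) of `C` and `D`. -/
def IsMerge {F V : Type} (C D M : Ctx F V) : Prop :=
  CLe C M ∧ CLe D M ∧ ∀ E, CLe C E → CLe D E → CLe M E

/-- `L` is a top of `C` according to `𝕃`. -/
def TopOf {F V : Type} (𝕃 : Set (Ctx F V)) (C L : Ctx F V) : Prop :=
  L ∈ 𝕃 ∧ CLe L C

/-- `M` is a max-top of `C` according to `𝕃`: a top maximal w.r.t. `⊑`. -/
def MaxTopOf {F V : Type} (𝕃 : Set (Ctx F V)) (C M : Ctx F V) : Prop :=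
  TopOf 𝕃 C M ∧ ∀ L, TopOf 𝕃 C L → CLe M L → L = M

/-- A layer system: a set of contexts satisfying (L1), (L2) and (L3). -/
structure LayerSystem {F V : Type} (𝕃 : Set (Ctx F V)) : Prop where
  /-- (L1): every term has a non-empty top. -/
  L1 : ∀ t : Ctx F V, noHole t → ∃ L, TopOf 𝕃 t L ∧ L ≠ hole
  /-- (L2): `C[x]_p ∈ 𝕃` iff `C[□]_p ∈ 𝕃`. -/
  L2 : ∀ (C : Ctx F V) (p : List Nat) (x : V), (Tm.sub p C).isSome →
        (Tm.repl p C (Tm.var x) ∈ 𝕃 ↔ Tm.repl p C hole ∈ 𝕃)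
  /-- (L3): layers are closed under merging at function positions. -/
  L3 : ∀ L ∈ 𝕃, ∀ N ∈ 𝕃, ∀ (p : List Nat) (Lp M : Ctx F V),
        funPos p L → Tm.sub p L = some Lp → IsMerge Lp N M → Tm.repl p L M ∈ 𝕃

/-- Condition (W): rewrite steps at function positions of the max-top can be
mirrored on the max-top, yielding a layer. -/
def CondW {F V : Type} (R : Set (Rule (F ⊕ Unit) V)) (𝕃 : Set (Ctx F V)) : Prop :=
  ∀ (s M : Ctx F V) (p : List Nat) (ρ : Rule (F ⊕ Unit) V) (t : Ctx F V),
    noHole s → MaxTopOf 𝕃 s M → funPos p M → ρ ∈ R → StepAt p ρ s t →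
    ∃ L ∈ 𝕃, StepAt p ρ M L

/-- Condition (C1): in (W), the resulting layer is the max-top of `t` or empty. -/
def CondC1 {F V : Type} (R : Set (Rule (F ⊕ Unit) V)) (𝕃 : Set (Ctx F V)) : Prop :=
  ∀ (s M : Ctx F V) (p : List Nat) (ρ : Rule (F ⊕ Unit) V) (t L : Ctx F V),
    noHole s → MaxTopOf 𝕃 s M → funPos p M → ρ ∈ R → StepAt p ρ s t →
    StepAt p ρ M L → L ∈ 𝕃 → (L = hole ∨ MaxTopOf 𝕃 t L)

/-- Condition (C2): if `L ⊑ N` are layers then filling a hole of `L` with the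
corresponding subcontext of `N` yields a layer. -/
def CondC2 {F V : Type} (𝕃 : Set (Ctx F V)) : Prop :=
  ∀ L ∈ 𝕃, ∀ N ∈ 𝕃, CLe L N → ∀ (p : List Nat) (Np : Ctx F V),
    Tm.sub p L = some (hole (F := F) (V := V)) → Tm.sub p N = some Np →
    Tm.repl p L Np ∈ 𝕃

/-- A TRS is weakly layered according to `𝕃` if (W) holds. -/
def WeaklyLayered {F V : Type} (R : Set (Rule (F ⊕ Unit) V)) (𝕃 : Set (Ctx F V)) : Prop :=
  CondW R 𝕃

/-- A TRS is layered according to `𝕃` if (W), (C1) and (C2) hold. -/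
def Layered {F V : Type} (R : Set (Rule (F ⊕ Unit) V)) (𝕃 : Set (Ctx F V)) : Prop :=
  CondW R 𝕃 ∧ CondC1 R 𝕃 ∧ CondC2 𝕃

/-- `HasRank 𝕃 t n`: the rank of `t` (according to the layer system `𝕃`) is `n`,
i.e., `n = 1 + max` of the ranks of the aliens of `t` (the subterms at the hole
positions of the max-top of `t`). -/
inductive HasRank {F V : Type} (𝕃 : Set (Ctx F V)) : Ctx F V → Nat → Prop
  | intro (t M : Ctx F V) (n : Nat) (rk : List Nat → Nat) :
      MaxTopOf 𝕃 t M →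
      (∀ (p : List Nat) (tp : Ctx F V), Tm.sub p M = some hole → Tm.sub p t = some tp →
        HasRank 𝕃 tp (rk p)) →
      (∀ p : List Nat, Tm.sub p M = some hole → rk p ≤ n) →
      (n = 0 ∨ ∃ (p : List Nat) (tp : Ctx F V), Tm.sub p M = some hole ∧
        Tm.sub p t = some tp ∧ rk p = n) →
      HasRank 𝕃 t (n + 1)

section MergeAux

variable {F V : Type}

lemma forall₂_trans_cle : ∀ {Cs Ds Es : List (Ctx F V)},
    List.Forall₂ CLe Cs Ds → List.Forall₂ CLe Ds Es → List.Forall₂ CLe Cs Es := by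
  intro Cs Ds Es h1 h2
  induction h1 generalizing Es with
  | nil => cases h2; exact List.Forall₂.nil
  | cons hcd _ ih =>
    cases h2 with
    | cons hde h2' => exact List.Forall₂.cons (CLe.trans hcd hde) (ih h2')

lemma cle_inv {C D : Ctx F V} (h : CLe C D) :
    C = hole ∨ (∃ x, C = Tm.var x ∧ D = Tm.var x) ∨
      (∃ f Cs Ds, C = Tm.app f Cs ∧ D = Tm.app f Ds ∧ List.Forall₂ CLe Cs Ds) := by
  refine CLe.rec (motive_1 := fun C D _ => C = hole ∨ (∃ x, C = Tm.var x ∧ D = Tm.var x) ∨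
      (∃ f Cs Ds, C = Tm.app f Cs ∧ D = Tm.app f Ds ∧ List.Forall₂ CLe Cs Ds))
    (motive_2 := fun _ _ _ => True)
    ?_ (fun _ => Or.inl rfl) ?_ (fun f {Cs Ds} hF _ => Or.inr (Or.inr ⟨f, Cs, Ds, rfl, rfl, hF⟩))
    trivial (fun _ _ _ _ => trivial) h
  · intro C
    cases C with
    | var x => exact Or.inr (Or.inl ⟨x, rfl, rfl⟩)
    | app f ts =>
      exact Or.inr (Or.inr ⟨f, ts, ts, rfl, rfl,
        List.forall₂_same.mpr fun t _ => CLe.refl t⟩)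
  · intro C D E h1 h2 ih1 ih2
    rcases ih1 with h | ⟨x, hC, hD⟩ | ⟨f, Cs, Ds, hC, hD, hF⟩
    · exact Or.inl h
    · subst hC; subst hD
      rcases ih2 with h | ⟨y, hD, hE⟩ | ⟨g, Ds, Es, hD, hE, _⟩
      · simp [hole] at h
      · cases Tm.var.inj hD; exact Or.inr (Or.inl ⟨x, rfl, hE⟩)
      · simp at hD
    · subst hC; subst hD
      rcases ih2 with h | ⟨y, hD, hE⟩ | ⟨g, Ds', Es, hD, hE, hF'⟩
      · -- app f Ds = hole; then Ds = [] so Cs = [] and f = inr ()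
        simp only [hole, Tm.app.injEq] at h
        obtain ⟨hf, hDs⟩ := h
        subst hf; subst hDs
        cases hF
        exact Or.inl rfl
      · simp at hD
      · obtain ⟨hg, hDs⟩ := Tm.app.inj hD
        subst hg; subst hDs
        exact Or.inr (Or.inr ⟨f, Cs, Es, rfl, hE, forall₂_trans_cle hF hF'⟩)

lemma isMerge_hole_left (D : Ctx F V) : IsMerge hole D D :=
  ⟨CLe.hole D, CLe.refl D, fun _ _ h2 => h2⟩

lemma isMerge_hole_right (C : Ctx F V) : IsMerge C hole C :=
  ⟨CLe.refl C, CLe.hole C, fun _ h1 _ => h1⟩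

lemma sizeOf_mem_lt {Es : List (Ctx F V)} {e : Ctx F V} (h : e ∈ Es) :
    sizeOf e < sizeOf Es := List.sizeOf_lt_of_mem h

lemma merge_exists_aux : ∀ (n : ℕ) (E : Ctx F V), sizeOf E ≤ n →
    ∀ C D, CLe C E → CLe D E → ∃ M, IsMerge C D M := by
  intro n
  induction n with
  | zero =>
    intro E hE
    exfalso
    cases E with
    | var x => simp at hE
    | app f ts => simp at hE
  | succ n ih =>
    intro E hE C D hC hD
    by_cases hCh : C = hole
    · subst hCh; exact ⟨D, isMerge_hole_left D⟩
    by_cases hDh : D = hole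
    · subst hDh; exact ⟨C, isMerge_hole_right C⟩
    cases E with
    | var x =>
      rcases cle_inv hC with h | ⟨y, hC1, hC2⟩ | ⟨f, Cs, Ds, hC1, hC2, _⟩
      · exact absurd h hCh
      · cases Tm.var.inj hC2; subst hC1
        rcases cle_inv hD with h | ⟨z, hD1, hD2⟩ | ⟨f, Cs, Ds, hD1, hD2, _⟩
        · exact absurd h hDh
        · cases Tm.var.inj hD2; subst hD1
          exact ⟨Tm.var x, CLe.refl _, CLe.refl _, fun _ h1 _ => h1⟩
        · simp at hD2
      · simp at hC2
    | app f Es =>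
      rcases cle_inv hC with h | ⟨y, hC1, hC2⟩ | ⟨g, Cs, Es1, hC1, hC2, hFC⟩
      · exact absurd h hCh
      · simp at hC2
      · obtain ⟨hg, hEs1⟩ := Tm.app.inj hC2
        subst hg; subst hEs1; subst hC1
        rcases cle_inv hD with h | ⟨z, hD1, hD2⟩ | ⟨g', Ds, Es2, hD1, hD2, hFD⟩
        · exact absurd h hDh
        · simp at hD2
        · obtain ⟨hg', hEs2⟩ := Tm.app.inj hD2
          subst hg'; subst hEs2; subst hD1
          -- list-level merge
          have hsz : ∀ e ∈ Es, sizeOf e ≤ n := by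
            intro e he
            have := sizeOf_mem_lt he
            simp only [Tm.app.sizeOf_spec] at hE
            omega
          have key : ∀ (Es' Cs' Ds' : List (Ctx F V)), (∀ e ∈ Es', sizeOf e ≤ n) →
              List.Forall₂ CLe Cs' Es' → List.Forall₂ CLe Ds' Es' →
              ∃ Ms, List.Forall₂ CLe Cs' Ms ∧ List.Forall₂ CLe Ds' Ms ∧
                ∀ Es'', List.Forall₂ CLe Cs' Es'' → List.Forall₂ CLe Ds' Es'' →
                  List.Forall₂ CLe Ms Es'' := by
            intro Es'
            induction Es' with
            | nil =>
              intro Cs' Ds' _ h1 h2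
              cases h1; cases h2
              exact ⟨[], List.Forall₂.nil, List.Forall₂.nil, fun _ _ h => h⟩
            | cons e Es' ihl =>
              intro Cs' Ds' hsz' h1 h2
              cases h1 with
              | cons hc h1' =>
                cases h2 with
                | cons hd h2' =>
                  obtain ⟨M, hM1, hM2, hM3⟩ :=
                    ih e (hsz' e List.mem_cons_self) _ _ hc hd
                  obtain ⟨Ms, hMs1, hMs2, hMs3⟩ :=
                    ihl _ _ (fun x hx => hsz' x (List.mem_cons_of_mem e hx)) h1' h2'
                  refine ⟨M :: Ms, List.Forall₂.cons hM1 hMs1,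
                    List.Forall₂.cons hM2 hMs2, ?_⟩
                  intro Es'' g1 g2
                  cases g1 with
                  | cons gc g1' =>
                    cases g2 with
                    | cons gd g2' =>
                      exact List.Forall₂.cons (hM3 _ gc gd) (hMs3 _ g1' g2')
          obtain ⟨Ms, hMs1, hMs2, hMs3⟩ := key Es Cs Ds hsz hFC hFD
          refine ⟨Tm.app f Ms, CLe.mono f hMs1, CLe.mono f hMs2, ?_⟩
          intro E' hCE' hDE'
          rcases cle_inv hCE' with h | ⟨y, hC1, hC2⟩ | ⟨g, Cs', Es', hC1, hC2, hF1⟩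
          · exact absurd h hCh
          · exact absurd hC1 (by simp)
          · obtain ⟨hg, hCs'⟩ := Tm.app.inj hC1
            subst hg; subst hCs'; subst hC2
            rcases cle_inv hDE' with h | ⟨y, hD1, hD2⟩ | ⟨g', Ds', Es'', hD1, hD2, hF2⟩
            · exact absurd h hDh
            · exact absurd hD1 (by simp)
            · obtain ⟨hg', hDs'⟩ := Tm.app.inj hD1
              subst hg'; subst hDs'
              obtain ⟨_, hEs'⟩ := Tm.app.inj hD2
              subst hEs'
              exact CLe.mono f (hMs3 _ hF1 hF2)

end MergeAux

/-- if two contexts have a common upper bound w.r.t. `⊑`, then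
they have a least upper bound (their merge). -/
theorem merge_of_upper_bound (F V : Type) (C D : Ctx F V)
    (h : ∃ E : Ctx F V, CLe C E ∧ CLe D E) :
    ∃ M : Ctx F V, IsMerge C D M := by
  obtain ⟨E, hC, hD⟩ := h
  exact merge_exists_aux (sizeOf E) E le_rfl C D hC hD
end

section
/- Every non-duplicating TRS R is bounded duplicating, i.e., the relative rewrite system {◇(x) → x} / R is terminating, where ◇ is a fresh unary function symbol. -/
/-- Lift a TRS over `F` to the signature `F ⊕ G` extended with fresh symbols. -/
def liftTRS {F V : Type} (G : Type) (R : Set (Rule F V)) : Set (Rule (F ⊕ G) V) :=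
  { ρ | ∃ ρ₀ ∈ R, ρ = ⟨ρ₀.lhs.mapF Sum.inl, ρ₀.rhs.mapF Sum.inl⟩ }

/-- The rules `◇(x) → x` for a fresh unary symbol `◇` (the `Sum.inr` symbol). -/
def DiamondRules (F V : Type) : Set (Rule (F ⊕ Unit) V) :=
  { ρ | ∃ x : V, ρ = ⟨Tm.app (Sum.inr ()) [Tm.var x], Tm.var x⟩ }

/-- `R` is bounded duplicating: `{◇(x) → x} / R` is terminating. -/
def BoundedDup {F V : Type} (R : Set (Rule F V)) : Prop :=
  RelTerminating (DiamondRules F V) (liftTRS Unit R)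

/-- The rule `⊤ → ⊥` for fresh constants `⊤ = Sum.inr true` and `⊥ = Sum.inr false`. -/
def TopBotRules (F V : Type) : Set (Rule (F ⊕ Bool) V) :=
  { ρ | ρ = ⟨Tm.app (Sum.inr true) [], Tm.app (Sum.inr false) []⟩ }

/-- `R` is weakly bounded duplicating: `{⊤ → ⊥} / R` is terminating. -/
def WeaklyBoundedDup {F V : Type} (R : Set (Rule F V)) : Prop :=
  RelTerminating (TopBotRules F V) (liftTRS Bool R)

namespace BDaux

open Tm

theorem my_ind {F V : Type} {P : Tm F V → Prop} (hv : ∀ x, P (.var x))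
    (ha : ∀ f ts, (∀ t ∈ ts, P t) → P (.app f ts)) : ∀ t, P t
  | .var x => hv x
  | .app f ts => ha f ts (fun t _ => my_ind hv ha t)
  decreasing_by · simp only [Tm.app.sizeOf_spec]; have := List.sizeOf_lt_of_mem ‹_›; omega

theorem subst_app {F V : Type} (σ : V → Tm F V) (f : F) (ts : List (Tm F V)) :
    Tm.subst σ (.app f ts) = .app f (ts.map (Tm.subst σ)) := by rw [Tm.subst]; simp

theorem vars_app {F V : Type} (f : F) (ts : List (Tm F V)) :
    Tm.vars (.app f ts) = ts.flatMap Tm.vars := by rw [Tm.vars]; simp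

theorem mapF_app {F V G : Type} (g : F → G) (f : F) (ts : List (Tm F V)) :
    Tm.mapF g (.app f ts) = .app (g f) (ts.map (Tm.mapF g)) := by rw [Tm.mapF]; simp

/-- Number of occurrences of the fresh symbol `◇` in a term. -/
def dcount {F V : Type} : Tm (F ⊕ Unit) V → ℕ
  | .var _ => 0
  | .app f ts =>
      (match f with | .inr _ => 1 | .inl _ => 0) +
        (ts.attach.map (fun ⟨t, _⟩ => dcount t)).sum
  decreasing_by · simp only [Tm.app.sizeOf_spec]; have := List.sizeOf_lt_of_mem ‹_›; omega

theorem subst_var {F V : Type} (σ : V → Tm F V) (x : V) :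
    Tm.subst σ (.var x) = σ x := by rw [Tm.subst]

theorem dcount_var {F V : Type} (x : V) : dcount (.var x : Tm (F ⊕ Unit) V) = 0 := by
  rw [dcount.eq_def]

theorem dcount_app {F V : Type} (f : F ⊕ Unit) (ts : List (Tm (F ⊕ Unit) V)) :
    dcount (.app f ts) =
      (match f with | .inr _ => 1 | .inl _ => 0) + (ts.map dcount).sum := by
  rw [dcount.eq_def]; simp

theorem sum_flatMap' {α : Type} (g : α → List ℕ) (l : List α) :
    (l.flatMap g).sum = (l.map (fun a => (g a).sum)).sum := by
  induction l <;> simp [*]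

theorem dcount_subst_mapF {F V : Type} (σ : V → Tm (F ⊕ Unit) V) (t : Tm F V) :
    dcount (Tm.subst σ (Tm.mapF Sum.inl t)) = (t.vars.map fun x => dcount (σ x)).sum := by
  induction t using my_ind with
  | hv x => rw [Tm.mapF, Tm.subst, Tm.vars]; simp
  | ha f ts ih =>
      rw [mapF_app, subst_app, dcount_app, vars_app, List.map_flatMap, sum_flatMap']
      simp only [List.map_map, zero_add]
      congr 1
      refine List.map_congr_left ?_
      intro t ht
      exact ih t ht

theorem sum_set {α : Type} (g : α → ℕ) :
    ∀ (ts : List α) (i : ℕ) (t₀ x : α), ts[i]? = some t₀ →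
      ((ts.set i x).map g).sum + g t₀ = (ts.map g).sum + g x
  | [], i, _, _, h => by simp at h
  | t :: ts, 0, t₀, x, h => by
      simp only [List.getElem?_cons_zero, Option.some.injEq] at h
      cases h
      simp; omega
  | t :: ts, i + 1, t₀, x, h => by
      simp only [List.getElem?_cons_succ] at h
      have := sum_set g ts i t₀ x h
      simp only [List.set, List.map_cons, List.sum_cons]
      omega

theorem stepAt_bound {F V : Type} (ρ : Rule (F ⊕ Unit) V) (c : ℕ)
    (h : ∀ σ, dcount (Tm.subst σ ρ.rhs) + c ≤ dcount (Tm.subst σ ρ.lhs)) :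
    ∀ (p : List ℕ) (s t : Tm (F ⊕ Unit) V), StepAt p ρ s t → dcount t + c ≤ dcount s
  | [], s, t, ⟨σ, hs, ht⟩ => by
      simp only [Tm.sub, Option.some.injEq] at hs
      subst hs
      rw [ht]
      exact h σ
  | i :: p, s, t, ⟨σ, hs, ht⟩ => by
      cases s with
      | var y => simp [Tm.sub] at hs
      | app f ts =>
          simp only [Tm.sub] at hs
          obtain ⟨t₀, hget, hsub⟩ := Option.bind_eq_some_iff.mp hs
          have ih := stepAt_bound ρ c h p t₀ (Tm.repl p t₀ (Tm.subst σ ρ.rhs)) ⟨σ, hsub, rfl⟩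
          rw [ht]
          simp only [Tm.repl, hget]
          rw [dcount_app, dcount_app]
          have hss := sum_set dcount ts i t₀ (Tm.repl p t₀ (Tm.subst σ ρ.rhs)) hget
          omega

theorem step_diamond_lt {F V : Type} (s t : Tm (F ⊕ Unit) V)
    (h : Step (DiamondRules F V) s t) : dcount t < dcount s := by
  obtain ⟨ρ, hρ, p, hst⟩ := h
  obtain ⟨x, rfl⟩ := hρ
  have := stepAt_bound _ 1 ?_ p s t hst
  · omega
  · intro σ
    simp [subst_app, subst_var, dcount_app]

theorem step_R_le {F V : Type} [DecidableEq V] (R : Set (Rule F V))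
    (hnd : ∀ ρ ∈ R, ∀ x : V, ρ.rhs.vars.count x ≤ ρ.lhs.vars.count x)
    (s t : Tm (F ⊕ Unit) V) (h : Step (liftTRS Unit R) s t) : dcount t ≤ dcount s := by
  obtain ⟨ρ, hρ, p, hst⟩ := h
  obtain ⟨ρ₀, hρ₀, rfl⟩ := hρ
  have := stepAt_bound _ 0 ?_ p s t hst
  · omega
  · intro σ
    rw [dcount_subst_mapF, dcount_subst_mapF]
    have hsp : ρ₀.rhs.vars.Subperm ρ₀.lhs.vars :=
      List.subperm_ext_iff.mpr (fun x _ => hnd ρ₀ hρ₀ x)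
    obtain ⟨l, hperm, hsl⟩ := hsp
    have h1 : (l.map fun x => dcount (σ x)).sum = (ρ₀.rhs.vars.map fun x => dcount (σ x)).sum :=
      (hperm.map _).sum_eq
    have h2 : (l.map fun x => dcount (σ x)).sum ≤ (ρ₀.lhs.vars.map fun x => dcount (σ x)).sum :=
      List.Sublist.sum_le_sum (hsl.map _) (fun a _ => Nat.zero_le a)
    omega

theorem steps_R_le {F V : Type} [DecidableEq V] (R : Set (Rule F V))
    (hnd : ∀ ρ ∈ R, ∀ x : V, ρ.rhs.vars.count x ≤ ρ.lhs.vars.count x)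
    (s t : Tm (F ⊕ Unit) V) (h : Steps (liftTRS Unit R) s t) : dcount t ≤ dcount s := by
  induction h with
  | refl => exact le_refl _
  | tail _ hstep ih => exact le_trans (step_R_le R hnd _ _ hstep) ih

end BDaux
/-- every non-duplicating TRS is bounded duplicating. -/
theorem nonduplicating_bounded_duplicating (F V : Type)
    [DecidableEq V] [Countable V] [Infinite V]
    (R : Set (Rule F V)) (hwf : ∀ ρ ∈ R, WfRule ρ)
    (hnd : ∀ ρ ∈ R, ∀ x : V, ρ.rhs.vars.count x ≤ ρ.lhs.vars.count x) :
    BoundedDup R := by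
  have key : ∀ s t : Tm (F ⊕ Unit) V, RelStep (DiamondRules F V) (liftTRS Unit R) s t → BDaux.dcount t < BDaux.dcount s := by
    rintro s t ⟨s', t', h1, h2, h3⟩
    have a1 := BDaux.steps_R_le R hnd _ _ h1
    have a2 := BDaux.step_diamond_lt _ _ h2
    have a3 := BDaux.steps_R_le R hnd _ _ h3
    omega
  exact Subrelation.wf (fun {a b} h => key b a h) (InvImage.wf BDaux.dcount Nat.lt_wfRel.wf)
end

section
/- Let → be the union of relations →_α for α in an index set I equipped with a well-founded order ≻. If every local peak t ←_α s →_β u is decreasing, i.e., t and u are joinable via t →*_{⋎α} · →=_β · →*_{⋎αβ} v ←*_{⋎αβ} · ←=_α · ←*_{⋎β} u (where →_{⋎α₁…αₙ} denotes the union of all →_γ with γ below some αᵢ in ≻), then → is confluent. -/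
namespace DD

open Relation Multiset

variable {A I : Type}

inductive Seq (r : I → A → A → Prop) : List I → A → A → Prop
  | nil (a : A) : Seq r [] a a
  | cons {α : I} {L : List I} {a b c : A} : r α a b → Seq r L b c → Seq r (α :: L) a c

theorem Seq.append {r : I → A → A → Prop} {L M : List I} {a b c : A}
    (h1 : Seq r L a b) (h2 : Seq r M b c) : Seq r (L ++ M) a c := by
  induction h1 with
  | nil => simpa
  | cons h _ ih => exact .cons h (ih h2)

theorem Seq.to_rtg {r : I → A → A → Prop} {L : List I} {a b : A} (h : Seq r L a b) :
    Relation.ReflTransGen (fun x y => ∃ γ, r γ x y) a b := by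
  induction h with
  | nil => exact .refl
  | cons h _ ih => exact Relation.ReflTransGen.head ⟨_, h⟩ ih

theorem rtg_to_seq {r : I → A → A → Prop} {p : I → Prop} {a b : A}
    (h : Relation.ReflTransGen (fun x y => ∃ γ, p γ ∧ r γ x y) a b) :
    ∃ L, Seq r L a b ∧ ∀ γ ∈ L, p γ := by
  induction h with
  | refl => exact ⟨[], .nil a, by simp⟩
  | tail _ hstep ih =>
    obtain ⟨L, hL, hp⟩ := ih
    obtain ⟨γ, hγ, hr⟩ := hstep
    refine ⟨L ++ [γ], hL.append (.cons hr (.nil _)), ?_⟩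
    intro x hx
    rcases List.mem_append.1 hx with h | h
    · exact hp x h
    · simp at h; subst h; exact hγ

theorem rg_to_seq {r : I → A → A → Prop} {γ : I} {a b : A} (h : Relation.ReflGen (r γ) a b) :
    ∃ L, Seq r L a b ∧ (L = [] ∨ L = [γ]) := by
  rcases h with _ | h
  · exact ⟨[], .nil a, .inl rfl⟩
  · exact ⟨[γ], .cons h (.nil _), .inr rfl⟩

/-- `bel lt L γ`: γ is below some element of `L`. -/
def bel (lt : I → I → Prop) (L : List I) (γ : I) : Prop := ∃ δ ∈ L, lt γ δ

/-- downward closed predicate -/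
def DC (lt : I → I → Prop) (Q : I → Prop) : Prop := ∀ a b, lt a b → Q b → Q a

open Classical in
/-- the van Oostrom measure of a list of labels, relative to a set `Q` of "dominated" labels. -/
noncomputable def mea (lt : I → I → Prop) : (I → Prop) → List I → Multiset I
  | _, [] => 0
  | Q, a :: L => (if Q a then 0 else {a}) + mea lt (fun b => Q b ∨ lt b a) L

variable {lt : I → I → Prop}

theorem mea_congr {Q Q' : I → Prop} (h : ∀ x, Q x ↔ Q' x) : ∀ L, mea lt Q L = mea lt Q' L := by
  intro L
  induction L generalizing Q Q' with
  | nil => rfl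
  | cons a L ih =>
    simp only [mea]
    rw [ih (fun b => by rw [h b])]
    by_cases ha : Q a
    · rw [if_pos ha, if_pos ((h a).1 ha)]
    · rw [if_neg ha, if_neg (fun c => ha ((h a).2 c))]

theorem mea_append {Q : I → Prop} {L M : List I} :
    mea lt Q (L ++ M) = mea lt Q L + mea lt (fun b => Q b ∨ bel lt L b) M := by
  induction L generalizing Q with
  | nil =>
    have := mea_congr (lt := lt) (Q := Q) (Q' := fun b => Q b ∨ bel lt [] b) (fun x => by simp [bel]) M
    simpa [mea] using this
  | cons a L ih =>
    simp only [List.cons_append, mea]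
    rw [ih (Q := fun b => Q b ∨ lt b a),
      mea_congr (Q := fun b => (Q b ∨ lt b a) ∨ bel lt L b)
        (Q' := fun b => Q b ∨ bel lt (a :: L) b) (fun x => by simp [bel]; tauto),
      add_assoc]

theorem mea_mono {Q Q' : I → Prop} (h : ∀ x, Q x → Q' x) : ∀ L, mea lt Q' L ≤ mea lt Q L := by
  intro L
  induction L generalizing Q Q' with
  | nil => exact le_refl _
  | cons a L ih =>
    simp only [mea]
    have htail := ih (Q := fun b => Q b ∨ lt b a) (Q' := fun b => Q' b ∨ lt b a)
      (fun x hx => by tauto)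
    by_cases ha : Q a
    · rw [if_pos ha, if_pos (h a ha)]; simpa
    · by_cases ha' : Q' a
      · rw [if_neg ha, if_pos ha', zero_add]
        exact htail.trans (Multiset.le_add_left _ _)
      · rw [if_neg ha, if_neg ha']
        exact add_le_add_right htail _
  -- may need fixing


theorem mea_nil {Q : I → Prop} : mea lt Q [] = 0 := rfl

open Classical in
theorem mea_cons {Q : I → Prop} {a : I} {L : List I} :
    mea lt Q (a :: L) = (if Q a then 0 else {a}) + mea lt (fun b => Q b ∨ lt b a) L := by
  simp [mea]

theorem mea_filter {Q S : I → Prop} : ∀ L : List I, ∃ F : Multiset I,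
    mea lt Q L ≤ mea lt (fun b => Q b ∨ S b) L + F ∧ ∀ γ ∈ F, S γ ∧ ¬ Q γ := by
  intro L
  induction L generalizing Q with
  | nil => exact ⟨0, by simp [mea], by simp⟩
  | cons a L ih =>
    obtain ⟨F, hF, hFm⟩ := ih (Q := fun b => Q b ∨ lt b a)
    have hcg : mea lt (fun b => (Q b ∨ lt b a) ∨ S b) L
        = mea lt (fun b => (Q b ∨ S b) ∨ lt b a) L := mea_congr (fun x => by tauto) L
    rw [hcg] at hF
    by_cases ha : Q a
    · refine ⟨F, ?_, fun γ hγ => ⟨(hFm γ hγ).1, fun c => (hFm γ hγ).2 (Or.inl c)⟩⟩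
      simp only [mea, if_pos ha, if_pos (Or.inl ha : Q a ∨ S a), zero_add]
      exact hF
    · by_cases hsa : S a
      · refine ⟨{a} + F, ?_, ?_⟩
        · simp only [mea, if_neg ha, if_pos (Or.inr hsa : Q a ∨ S a), zero_add]
          calc {a} + mea lt (fun b => Q b ∨ lt b a) L
              ≤ {a} + (mea lt (fun b => (Q b ∨ S b) ∨ lt b a) L + F) := add_le_add_right hF _
            _ = mea lt (fun b => (Q b ∨ S b) ∨ lt b a) L + ({a} + F) := add_left_comm _ _ _
        · intro γ hγ
          rcases Multiset.mem_add.1 hγ with h | h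
          · rw [Multiset.mem_singleton.1 h]; exact ⟨hsa, ha⟩
          · exact ⟨(hFm γ h).1, fun c => (hFm γ h).2 (Or.inl c)⟩
      · refine ⟨F, ?_, fun γ hγ => ⟨(hFm γ hγ).1, fun c => (hFm γ hγ).2 (Or.inl c)⟩⟩
        simp only [mea, if_neg ha, if_neg (fun h => h.elim ha hsa : ¬(Q a ∨ S a))]
        rw [add_assoc]
        exact add_le_add_right hF _

theorem mea_exists_bound {Q : I → Prop} : ∀ L : List I, ∃ F : Multiset I,
    mea lt Q L ≤ F ∧ ∀ γ ∈ F, γ ∈ L ∧ ¬ Q γ := by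
  intro L
  induction L generalizing Q with
  | nil => exact ⟨0, le_refl _, by simp⟩
  | cons a L ih =>
    obtain ⟨F, hF, hFm⟩ := ih (Q := fun b => Q b ∨ lt b a)
    by_cases ha : Q a
    · refine ⟨F, ?_, fun γ hγ => ⟨List.mem_cons_of_mem _ (hFm γ hγ).1,
        fun c => (hFm γ hγ).2 (Or.inl c)⟩⟩
      simpa [mea, if_pos ha] using hF
    · refine ⟨{a} + F, ?_, ?_⟩
      · simpa [mea, if_neg ha] using add_le_add_left hF ({a} : Multiset I)
      · intro γ hγ
        rcases Multiset.mem_add.1 hγ with h | h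
        · rw [Multiset.mem_singleton.1 h]; exact ⟨List.mem_cons_self, ha⟩
        · exact ⟨List.mem_cons_of_mem _ (hFm γ h).1, fun c => (hFm γ h).2 (Or.inl c)⟩

theorem mea_eq_zero {Q : I → Prop} : ∀ {L : List I}, (∀ a ∈ L, Q a) → mea lt Q L = 0 := by
  intro L
  induction L generalizing Q with
  | nil => intro _; rfl
  | cons a L ih =>
    intro h
    simp only [mea, if_pos (h a (List.mem_cons_self))]
    rw [ih (fun b hb => Or.inl (h b (List.mem_cons_of_mem _ hb)))]
    simp

/-! ### The Dershowitz–Manna style order via CutExpand -/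

def ordle (lt : I → I → Prop) : Multiset I → Multiset I → Prop :=
  Relation.ReflTransGen (Relation.CutExpand lt)

def ords (lt : I → I → Prop) : Multiset I → Multiset I → Prop :=
  Relation.TransGen (Relation.CutExpand lt)

theorem ordle_refl {a : Multiset I} : ordle lt a a := Relation.ReflTransGen.refl

theorem ordle_trans {a b c : Multiset I} (h1 : ordle lt a b) (h2 : ordle lt b c) :
    ordle lt a c := Relation.ReflTransGen.trans h1 h2

theorem ordle_of_le {a b : Multiset I} (h : a ≤ b) : ordle lt a b := by
  obtain ⟨c, rfl⟩ := Multiset.le_iff_exists_add.1 h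
  clear h
  induction c using Multiset.induction with
  | empty => simpa using (ordle_refl : ordle lt a a)
  | cons x c ih =>
    refine Relation.ReflTransGen.tail (b := a + c) ih ⟨0, x, by simp, ?_⟩
    rw [add_zero, ← Multiset.singleton_add, add_comm ({x} : Multiset I) c, ← add_assoc]

open Classical in
theorem repl {X Y C : Multiset I} (hX : X ≠ 0) (hY : ∀ y ∈ Y, ∃ x ∈ X, lt y x) :
    ords lt (C + Y) (C + X) := by
  induction X using Multiset.induction generalizing C Y with
  | empty => exact absurd rfl hX
  | cons a X ih =>
    by_cases hX0 : X = 0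
    · subst hX0
      refine Relation.TransGen.single ⟨Y, a, fun y hy => ?_, ?_⟩
      · obtain ⟨x, hx, hlt⟩ := hY y hy
        rcases Multiset.mem_cons.1 hx with h | h
        · rwa [← h]
        · exact absurd h (Multiset.notMem_zero x)
      · simp only [Multiset.cons_zero, ← Multiset.singleton_add]
        simp [add_comm, add_left_comm, add_assoc]
    · set Y1 := Y.filter (fun y => lt y a) with hY1
      set Y2 := Y.filter (fun y => ¬ lt y a) with hY2
      have hsplit : Y1 + Y2 = Y := Multiset.filter_add_not _ Y
      have h2 : ∀ y ∈ Y2, ∃ x ∈ X, lt y x := by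
        intro y hy
        have hny : ¬ lt y a := (Multiset.mem_filter.1 hy).2
        obtain ⟨x, hx, hlt⟩ := hY y (by rw [← hsplit]; exact Multiset.mem_add.2 (Or.inr hy))
        rcases Multiset.mem_cons.1 hx with h | h
        · exact absurd (h ▸ hlt) hny
        · exact ⟨x, h, hlt⟩
      have step1 : ords lt (C + Y) (C + Y1 + X) := by
        have := ih (C := C + Y1) (Y := Y2) hX0 h2
        rwa [add_assoc, hsplit] at this
      refine Relation.TransGen.tail step1 ⟨Y1, a, fun y hy => (Multiset.mem_filter.1 hy).2, ?_⟩
      simp only [← Multiset.singleton_add]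
      simp [add_comm, add_left_comm, add_assoc]

theorem ords_key {X Y C N : Multiset I} (hX : X ≠ 0) (hY : ∀ y ∈ Y, ∃ x ∈ X, lt y x)
    (hN : N ≤ C + Y) : ords lt N (C + X) :=
  Relation.TransGen.trans_right (ordle_of_le hN) (repl hX hY)

theorem ordle_key {X Y C N : Multiset I} (hY : ∀ y ∈ Y, ∃ x ∈ X, lt y x)
    (hN : N ≤ C + Y) : ordle lt N (C + X) := by
  by_cases hX : X = 0
  · subst hX
    have hY0 : Y = 0 := by
      rw [Multiset.eq_zero_iff_forall_notMem]
      intro y hy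
      obtain ⟨x, hx, _⟩ := hY y hy
      exact Multiset.notMem_zero x hx
    subst hY0
    exact ordle_of_le (by simpa using hN)
  · exact (ords_key hX hY hN).to_reflTransGen

theorem ordle_add {a b c d : Multiset I} (h1 : ordle lt a b) (h2 : ordle lt c d) :
    ordle lt (a + c) (b + d) := by
  have step : ∀ (e : Multiset I) {x y : Multiset I}, ordle lt x y → ordle lt (e + x) (e + y) := by
    intro e x y h
    exact Relation.ReflTransGen.lift (fun m => e + m)
      (fun p q hpq => (Relation.cutExpand_add_left e).2 hpq) _ _ h
  have h3 : ordle lt (a + c) (a + d) := step a h2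
  have h4 : ordle lt (a + d) (b + d) := by
    rw [add_comm a d, add_comm b d]
    exact step d h1
  exact ordle_trans h3 h4

theorem ords_of_le_ords {N M K : Multiset I} (h : N ≤ M) (h2 : ords lt M K) : ords lt N K :=
  Relation.TransGen.trans_right (ordle_of_le h) h2

theorem ordle_of_le_ordle {N M K : Multiset I} (h : N ≤ M) (h2 : ordle lt M K) : ordle lt N K :=
  ordle_trans (ordle_of_le h) h2

theorem ordle_of_ordle_le {N M K : Multiset I} (h : ordle lt N M) (h2 : M ≤ K) : ordle lt N K :=
  ordle_trans h (ordle_of_le h2)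

theorem bel_append {L M : List I} {γ : I} :
    bel lt (L ++ M) γ ↔ bel lt L γ ∨ bel lt M γ := by
  constructor
  · rintro ⟨δ, hδ, h⟩
    rcases List.mem_append.1 hδ with h' | h'
    · exact Or.inl ⟨δ, h', h⟩
    · exact Or.inr ⟨δ, h', h⟩
  · rintro (⟨δ, hδ, h⟩ | ⟨δ, hδ, h⟩)
    · exact ⟨δ, List.mem_append.2 (Or.inl hδ), h⟩
    · exact ⟨δ, List.mem_append.2 (Or.inr hδ), h⟩

theorem bel_cons {a : I} {L : List I} {γ : I} :
    bel lt (a :: L) γ ↔ lt γ a ∨ bel lt L γ := by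
  constructor
  · rintro ⟨δ, hδ, h⟩
    rcases List.mem_cons.1 hδ with h' | h'
    · exact Or.inl (h' ▸ h)
    · exact Or.inr ⟨δ, h', h⟩
  · rintro (h | ⟨δ, hδ, h⟩)
    · exact ⟨a, List.mem_cons_self, h⟩
    · exact ⟨δ, List.mem_cons_of_mem _ hδ, h⟩

theorem bel_nil {γ : I} : bel lt [] γ ↔ False := by simp [bel]

theorem bel_singleton {x γ : I} : bel lt [x] γ ↔ lt γ x := by
  rw [bel_cons]; simp [bel]

theorem DC_or_lt (htr : Transitive lt) {Q : I → Prop} (hQ : DC lt Q) (α : I) :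
    DC lt (fun b => Q b ∨ lt b α) := by
  intro a b hab h
  rcases h with h | h
  · exact Or.inl (hQ a b hab h)
  · exact Or.inr (htr hab h)

open Classical in
theorem shape_bound {Q : I → Prop} {x : I} {D1 Dm D2 : List I} (hDm : Dm = [] ∨ Dm = [x]) :
    ∃ Wm W : Multiset I,
      mea lt Q (D1 ++ (Dm ++ D2)) ≤ Wm + W ∧
      (Wm = 0 ∨ (Wm = {x} ∧ ¬ Q x ∧ Dm = [x])) ∧
      ∀ γ ∈ W, ¬ Q γ ∧ (γ ∈ D1 ∨ (γ ∈ D2 ∧ (Dm = [x] → ¬ lt γ x))) := by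
  obtain ⟨Fa, hFa, hFam⟩ := mea_exists_bound (lt := lt) (Q := Q) D1
  rw [mea_append, mea_append]
  obtain ⟨Fb, hFb, hFbm⟩ := mea_exists_bound (lt := lt)
    (Q := fun b => (Q b ∨ bel lt D1 b) ∨ bel lt Dm b) D2
  rcases hDm with hDm | hDm
  · subst hDm
    refine ⟨0, Fa + Fb, ?_, Or.inl rfl, ?_⟩
    · rw [mea_nil, zero_add, zero_add]
      exact add_le_add hFa hFb
    · intro γ hγ
      rcases Multiset.mem_add.1 hγ with h | h
      · exact ⟨(hFam γ h).2, Or.inl (hFam γ h).1⟩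
      · refine ⟨fun c => (hFbm γ h).2 (Or.inl (Or.inl c)), Or.inr ⟨(hFbm γ h).1, ?_⟩⟩
        intro hx; simp at hx
  · subst hDm
    have hmid : mea lt (fun b => Q b ∨ bel lt D1 b) [x]
        = (if (Q x ∨ bel lt D1 x) then 0 else {x}) := by
      rw [mea_cons, mea_nil, add_zero]
      congr 1
    by_cases hQx : Q x ∨ bel lt D1 x
    · refine ⟨0, Fa + Fb, ?_, Or.inl rfl, ?_⟩
      · rw [hmid, if_pos hQx, zero_add, zero_add]
        exact add_le_add hFa hFb
      · intro γ hγ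
        rcases Multiset.mem_add.1 hγ with h | h
        · exact ⟨(hFam γ h).2, Or.inl (hFam γ h).1⟩
        · refine ⟨fun c => (hFbm γ h).2 (Or.inl (Or.inl c)), Or.inr ⟨(hFbm γ h).1, ?_⟩⟩
          intro _ hlt
          exact (hFbm γ h).2 (Or.inr (bel_singleton.2 hlt))
    · push_neg at hQx
      refine ⟨{x}, Fa + Fb, ?_, Or.inr ⟨rfl, hQx.1, rfl⟩, ?_⟩
      · rw [hmid, if_neg (by tauto)]
        calc mea lt Q D1 + ({x} + mea lt (fun b => (Q b ∨ bel lt D1 b) ∨ bel lt [x] b) D2)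
            ≤ Fa + ({x} + Fb) := add_le_add hFa (add_le_add_right hFb _)
          _ = {x} + (Fa + Fb) := by rw [add_left_comm]
      · intro γ hγ
        rcases Multiset.mem_add.1 hγ with h | h
        · exact ⟨(hFam γ h).2, Or.inl (hFam γ h).1⟩
        · refine ⟨fun c => (hFbm γ h).2 (Or.inl (Or.inl c)), Or.inr ⟨(hFbm γ h).1, ?_⟩⟩
          intro _ hlt
          exact (hFbm γ h).2 (Or.inr (bel_singleton.2 hlt))

set_option maxHeartbeats 2000000 in
theorem main {A I : Type} (r : I → A → A → Prop) (lt : I → I → Prop)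
    (htr : Transitive lt) (hwf : WellFounded (ords lt))
    (hdec : ∀ (α β : I) (s t u : A), r α s t → r β s u →
      ∃ (v : A) (D1 Dm D2 E1 Em E2 : List I),
       Seq r (D1 ++ (Dm ++ D2)) t v ∧ Seq r (E1 ++ (Em ++ E2)) u v ∧
       (∀ γ ∈ D1, lt γ α) ∧ (Dm = [] ∨ Dm = [β]) ∧ (∀ γ ∈ D2, lt γ α ∨ lt γ β) ∧
       (∀ γ ∈ E1, lt γ β) ∧ (Em = [] ∨ Em = [α]) ∧ (∀ γ ∈ E2, lt γ α ∨ lt γ β)) :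
    ∀ (μ : Multiset I) (L M : List I) (s t u : A), Seq r L s t → Seq r M s u →
      mea lt (fun _ => False) L + mea lt (fun _ => False) M = μ →
      ∃ (v : A) (Ms Ls : List I), Seq r Ms t v ∧ Seq r Ls u v ∧
        (∀ Q, DC lt Q → ordle lt (mea lt (fun b => Q b ∨ bel lt L b) Ms) (mea lt Q M)) ∧
        (∀ Q, DC lt Q → ordle lt (mea lt (fun b => Q b ∨ bel lt M b) Ls) (mea lt Q L)) ∧
        (∀ γ ∈ Ms, γ ∈ M ∨ bel lt (L ++ M) γ) ∧
        (∀ γ ∈ Ls, γ ∈ L ∨ bel lt (L ++ M) γ) := by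
  intro μ
  induction μ using hwf.induction with
  | _ μ IH =>
  intro L M s t u hL hM hμ
  cases hL with
  | nil =>
    refine ⟨u, M, [], hM, .nil u, ?_, ?_, fun γ h => Or.inl h, by simp⟩
    · intro Q _
      rw [mea_congr (Q' := Q) (fun b => by simp [bel])]
      exact ordle_refl
    · intro Q _
      exact ordle_refl
  | @cons α L₂ _ t₁ _ hα hL₂ =>
  cases hM with
  | nil =>
    refine ⟨t, [], α :: L₂, .nil t, .cons hα hL₂, ?_, ?_, by simp, fun γ h => Or.inl h⟩
    · intro Q _
      exact ordle_refl
    · intro Q _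
      rw [mea_congr (Q' := Q) (fun b => by simp [bel])]
      exact ordle_refl
  | @cons β M₂ _ u₁ _ hβ hM₂ =>
  obtain ⟨v₀, D1, Dm, D2, E1, Em, E2, hD, hE, hD1, hDm, hD2, hE1, hEm, hE2⟩ :=
    hdec α β s t₁ u₁ hα hβ
  -- abbreviations (as plain equalities)
  have hbotα : mea lt (fun _ => False) (α :: L₂) = {α} + mea lt (fun b => lt b α) L₂ := by
    rw [mea_cons, if_neg (by exact not_false)]
    congr 1
    exact mea_congr (fun b => by tauto) L₂
  have hbotβ : mea lt (fun _ => False) (β :: M₂) = {β} + mea lt (fun b => lt b β) M₂ := by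
    rw [mea_cons, if_neg (by exact not_false)]
    congr 1
    exact mea_congr (fun b => by tauto) M₂
  -- facts about labels
  have keyD : ∀ γ ∈ (D1 ++ (Dm ++ D2)), γ = β ∨ lt γ α ∨ lt γ β := by
    intro γ hγ
    rcases List.mem_append.1 hγ with h | h
    · exact Or.inr (Or.inl (hD1 γ h))
    rcases List.mem_append.1 h with h | h
    · rcases hDm with hh | hh <;> rw [hh] at h
      · simp at h
      · simp at h; exact Or.inl h
    · exact Or.inr (hD2 γ h)
  have keyE : ∀ γ ∈ (E1 ++ (Em ++ E2)), γ = α ∨ lt γ α ∨ lt γ β := by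
    intro γ hγ
    rcases List.mem_append.1 hγ with h | h
    · exact Or.inr (Or.inr (hE1 γ h))
    rcases List.mem_append.1 h with h | h
    · rcases hEm with hh | hh <;> rw [hh] at h
      · simp at h
      · simp at h; exact Or.inl h
    · exact Or.inr (hE2 γ h)
  have kbelD : ∀ γ, bel lt (D1 ++ (Dm ++ D2)) γ → lt γ α ∨ lt γ β := by
    rintro γ ⟨δ, hδ, h⟩
    rcases keyD δ hδ with hh | hh | hh
    · exact Or.inr (hh ▸ h)
    · exact Or.inl (htr h hh)
    · exact Or.inr (htr h hh)
  have kbelE : ∀ γ, bel lt (E1 ++ (Em ++ E2)) γ → lt γ α ∨ lt γ β := by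
    rintro γ ⟨δ, hδ, h⟩
    rcases keyE δ hδ with hh | hh | hh
    · exact Or.inl (hh ▸ h)
    · exact Or.inl (htr h hh)
    · exact Or.inr (htr h hh)
  have kbelLD : ∀ γ, bel lt (L₂ ++ (D1 ++ (Dm ++ D2))) γ →
      bel lt L₂ γ ∨ lt γ α ∨ lt γ β := by
    intro γ h
    rcases bel_append.1 h with h | h
    · exact Or.inl h
    · exact Or.inr (kbelD γ h)
  -- the local-diagram measure facts
  have R1 : ords lt (mea lt (fun _ => False) L₂ + mea lt (fun _ => False) (D1 ++ (Dm ++ D2))) μ := by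
    obtain ⟨F1, hF1, hF1m⟩ := mea_filter (lt := lt) (Q := fun _ => False) (S := fun b => lt b α) L₂
    rw [mea_congr (Q := fun b => False ∨ lt b α) (Q' := fun b => lt b α) (fun b => by tauto)] at hF1
    obtain ⟨Wm, W, hW, hWm, hWp⟩ := shape_bound (lt := lt) (Q := fun _ => False) (x := β) hDm
    rw [← hμ, hbotα, hbotβ]
    rcases hWm with hWm | ⟨hWm, _, hDmβ⟩
    · subst hWm
      rw [zero_add] at hW
      rw [show ({α} + mea lt (fun b => lt b α) L₂) + ({β} + mea lt (fun b => lt b β) M₂)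
        = mea lt (fun b => lt b α) L₂ + ({α} + ({β} + mea lt (fun b => lt b β) M₂)) from by abel]
      apply ords_key (Y := F1 + W) (by simp)
      · intro y hy
        rcases Multiset.mem_add.1 hy with h | h
        · exact ⟨α, by simp, (hF1m y h).1⟩
        · rcases (hWp y h).2 with h2 | ⟨h2, h3⟩
          · exact ⟨α, by simp, hD1 y h2⟩
          · rcases hD2 y h2 with h4 | h4
            · exact ⟨α, by simp, h4⟩
            · rcases hDm with h5 | h5
              · exact ⟨β, by simp, h4⟩
              · exact absurd h4 (h3 h5)
      · calc mea lt (fun _ => False) L₂ + mea lt (fun _ => False) (D1 ++ (Dm ++ D2))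
            ≤ (mea lt (fun b => lt b α) L₂ + F1) + W := add_le_add hF1 hW
          _ = mea lt (fun b => lt b α) L₂ + (F1 + W) := add_assoc _ _ _
    · subst hWm
      rw [show ({α} + mea lt (fun b => lt b α) L₂) + ({β} + mea lt (fun b => lt b β) M₂)
        = ({β} + mea lt (fun b => lt b α) L₂) + ({α} + mea lt (fun b => lt b β) M₂) from by abel]
      apply ords_key (Y := F1 + W) (by simp)
      · intro y hy
        rcases Multiset.mem_add.1 hy with h | h
        · exact ⟨α, by simp, (hF1m y h).1⟩
        · rcases (hWp y h).2 with h2 | ⟨h2, h3⟩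
          · exact ⟨α, by simp, hD1 y h2⟩
          · rcases hD2 y h2 with h4 | h4
            · exact ⟨α, by simp, h4⟩
            · exact absurd h4 (h3 hDmβ)
      · calc mea lt (fun _ => False) L₂ + mea lt (fun _ => False) (D1 ++ (Dm ++ D2))
            ≤ (mea lt (fun b => lt b α) L₂ + F1) + ({β} + W) := add_le_add hF1 hW
          _ = ({β} + mea lt (fun b => lt b α) L₂) + (F1 + W) := by abel
  obtain ⟨w, D', L₂', hD', hL₂', A1, B1, C1M, C1L⟩ :=
    IH _ R1 L₂ (D1 ++ (Dm ++ D2)) t₁ t v₀ hL₂ hD rfl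
  -- more label facts
  have kL₂' : ∀ γ ∈ L₂', γ ∈ L₂ ∨ bel lt L₂ γ ∨ lt γ α ∨ lt γ β := by
    intro γ h
    rcases C1L γ h with h | h
    · exact Or.inl h
    · exact Or.inr (kbelLD γ h)
  have kbelL₂' : ∀ γ, bel lt L₂' γ → bel lt L₂ γ ∨ lt γ α ∨ lt γ β := by
    rintro γ ⟨δ, hδ, h⟩
    rcases kL₂' δ hδ with hh | hh | hh | hh
    · exact Or.inl ⟨δ, hh, h⟩
    · rcases hh with ⟨ε, hε, hh⟩
      exact Or.inl ⟨ε, hε, htr h hh⟩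
    · exact Or.inr (Or.inl (htr h hh))
    · exact Or.inr (Or.inr (htr h hh))
  have hDCα : DC lt (fun b => lt b α) := fun a b hab h => htr hab h
  have hB1α := B1 (fun b => lt b α) hDCα
  have R2 : ords lt (mea lt (fun _ => False) M₂
      + mea lt (fun _ => False) ((E1 ++ (Em ++ E2)) ++ L₂')) μ := by
    obtain ⟨F3, hF3, hF3m⟩ := mea_filter (lt := lt) (Q := fun _ => False) (S := fun b => lt b β) M₂
    rw [mea_congr (Q := fun b => False ∨ lt b β) (Q' := fun b => lt b β) (fun b => by tauto)] at hF3
    rw [mea_append (L := E1 ++ (Em ++ E2)) (M := L₂')]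
    obtain ⟨Wm, W, hW, hWm, hWp⟩ := shape_bound (lt := lt) (Q := fun _ => False) (x := α) hEm
    rw [← hμ, hbotα, hbotβ]
    rcases hWm with hWm | ⟨hWm, _, hEmα⟩
    · subst hWm
      rw [zero_add] at hW
      obtain ⟨F5, hF5, hF5m⟩ := mea_filter (lt := lt)
        (Q := fun b => False ∨ bel lt (E1 ++ (Em ++ E2)) b)
        (S := fun b => lt b α ∨ lt b β) L₂'
      have hmono : mea lt (fun b => (False ∨ bel lt (E1 ++ (Em ++ E2)) b) ∨ (lt b α ∨ lt b β)) L₂'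
          ≤ mea lt (fun b => lt b α ∨ bel lt (D1 ++ (Dm ++ D2)) b) L₂' := by
        apply mea_mono
        intro b hb
        rcases hb with hb | hb
        · exact Or.inr (Or.inl hb)
        · exact Or.inr (kbelD b hb)
      have hord1 : ordle lt
          (mea lt (fun _ => False) M₂ + (mea lt (fun _ => False) (E1 ++ (Em ++ E2))
            + mea lt (fun b => False ∨ bel lt (E1 ++ (Em ++ E2)) b) L₂'))
          ((mea lt (fun b => lt b β) M₂ + F3 + W + F5)
            + mea lt (fun b => lt b α ∨ bel lt (D1 ++ (Dm ++ D2)) b) L₂') := by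
        apply ordle_of_le
        calc mea lt (fun _ => False) M₂ + (mea lt (fun _ => False) (E1 ++ (Em ++ E2))
            + mea lt (fun b => False ∨ bel lt (E1 ++ (Em ++ E2)) b) L₂')
            ≤ (mea lt (fun b => lt b β) M₂ + F3) + (W
              + (mea lt (fun b => lt b α ∨ bel lt (D1 ++ (Dm ++ D2)) b) L₂' + F5)) := by
              exact add_le_add hF3 (add_le_add hW (hF5.trans (add_le_add_left hmono _)))
          _ = (mea lt (fun b => lt b β) M₂ + F3 + W + F5)
            + mea lt (fun b => lt b α ∨ bel lt (D1 ++ (Dm ++ D2)) b) L₂' := by abel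
      have hord2 : ordle lt
          ((mea lt (fun b => lt b β) M₂ + F3 + W + F5)
            + mea lt (fun b => lt b α ∨ bel lt (D1 ++ (Dm ++ D2)) b) L₂')
          ((mea lt (fun b => lt b β) M₂ + F3 + W + F5) + mea lt (fun b => lt b α) L₂) :=
        ordle_add ordle_refl hB1α
      refine Relation.TransGen.trans_right (ordle_trans hord1 hord2) ?_
      rw [show ({α} + mea lt (fun b => lt b α) L₂) + ({β} + mea lt (fun b => lt b β) M₂)
        = (mea lt (fun b => lt b α) L₂ + mea lt (fun b => lt b β) M₂) + ({α} + {β}) from by abel]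
      apply ords_key (Y := F3 + W + F5) (by simp)
      · intro y hy
        rcases Multiset.mem_add.1 hy with hy | hy
        rcases Multiset.mem_add.1 hy with hy | hy
        · exact ⟨β, by simp, (hF3m y hy).1⟩
        · rcases (hWp y hy).2 with h2 | ⟨h2, _⟩
          · exact ⟨β, by simp, hE1 y h2⟩
          · rcases hE2 y h2 with h4 | h4
            · exact ⟨α, by simp, h4⟩
            · exact ⟨β, by simp, h4⟩
        · rcases (hF5m y hy).1 with h4 | h4
          · exact ⟨α, by simp, h4⟩
          · exact ⟨β, by simp, h4⟩
      · apply le_of_eq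
        abel
    · subst hWm
      obtain ⟨F5, hF5, hF5m⟩ := mea_filter (lt := lt)
        (Q := fun b => False ∨ bel lt (E1 ++ (Em ++ E2)) b)
        (S := fun b => lt b β) L₂'
      have hαE : α ∈ E1 ++ (Em ++ E2) := by
        rw [hEmα]; simp
      have hmono : mea lt (fun b => (False ∨ bel lt (E1 ++ (Em ++ E2)) b) ∨ lt b β) L₂'
          ≤ mea lt (fun b => lt b α ∨ bel lt (D1 ++ (Dm ++ D2)) b) L₂' := by
        apply mea_mono
        intro b hb
        rcases hb with hb | hb
        · exact Or.inl (Or.inr ⟨α, hαE, hb⟩)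
        · rcases kbelD b hb with h | h
          · exact Or.inl (Or.inr ⟨α, hαE, h⟩)
          · exact Or.inr h
      have hord1 : ordle lt
          (mea lt (fun _ => False) M₂ + (mea lt (fun _ => False) (E1 ++ (Em ++ E2))
            + mea lt (fun b => False ∨ bel lt (E1 ++ (Em ++ E2)) b) L₂'))
          (({α} + mea lt (fun b => lt b β) M₂ + F3 + W + F5)
            + mea lt (fun b => lt b α ∨ bel lt (D1 ++ (Dm ++ D2)) b) L₂') := by
        apply ordle_of_le
        calc mea lt (fun _ => False) M₂ + (mea lt (fun _ => False) (E1 ++ (Em ++ E2))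
            + mea lt (fun b => False ∨ bel lt (E1 ++ (Em ++ E2)) b) L₂')
            ≤ (mea lt (fun b => lt b β) M₂ + F3) + (({α} + W)
              + (mea lt (fun b => lt b α ∨ bel lt (D1 ++ (Dm ++ D2)) b) L₂' + F5)) := by
              exact add_le_add hF3 (add_le_add hW (hF5.trans (add_le_add_left hmono _)))
          _ = ({α} + mea lt (fun b => lt b β) M₂ + F3 + W + F5)
            + mea lt (fun b => lt b α ∨ bel lt (D1 ++ (Dm ++ D2)) b) L₂' := by abel
      have hord2 : ordle lt
          (({α} + mea lt (fun b => lt b β) M₂ + F3 + W + F5)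
            + mea lt (fun b => lt b α ∨ bel lt (D1 ++ (Dm ++ D2)) b) L₂')
          (({α} + mea lt (fun b => lt b β) M₂ + F3 + W + F5) + mea lt (fun b => lt b α) L₂) :=
        ordle_add ordle_refl hB1α
      refine Relation.TransGen.trans_right (ordle_trans hord1 hord2) ?_
      rw [show ({α} + mea lt (fun b => lt b α) L₂) + ({β} + mea lt (fun b => lt b β) M₂)
        = ({α} + mea lt (fun b => lt b β) M₂ + mea lt (fun b => lt b α) L₂) + {β} from by abel]
      apply ords_key (Y := F3 + W + F5) (by simp)
      · intro y hy
        rcases Multiset.mem_add.1 hy with hy | hy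
        rcases Multiset.mem_add.1 hy with hy | hy
        · exact ⟨β, by simp, (hF3m y hy).1⟩
        · rcases (hWp y hy).2 with h2 | ⟨h2, h3⟩
          · exact ⟨β, by simp, hE1 y h2⟩
          · rcases hE2 y h2 with h4 | h4
            · exact absurd h4 (h3 hEmα)
            · exact ⟨β, by simp, h4⟩
        · exact ⟨β, by simp, (hF5m y hy).1⟩
      · apply le_of_eq
        abel
  obtain ⟨x, G, M₂', hG, hM₂', A2, B2, C2M, C2L⟩ :=
    IH _ R2 M₂ ((E1 ++ (Em ++ E2)) ++ L₂') u₁ u w hM₂ (hE.append hL₂') rfl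
  refine ⟨x, D' ++ M₂', G, hD'.append hM₂', hG, ?_, ?_, ?_, ?_⟩
  · -- invariant (A')
    intro Q hQ
    have hQα' : DC lt (fun b => Q b ∨ lt b α) := DC_or_lt htr hQ α
    have hQβ'dc : DC lt (fun b => Q b ∨ lt b β) := DC_or_lt htr hQ β
    rw [mea_congr (Q := fun b => Q b ∨ bel lt (α :: L₂) b)
      (Q' := fun b => (Q b ∨ lt b α) ∨ bel lt L₂ b)
      (fun b => by simp only [bel_cons]; tauto) (D' ++ M₂'), mea_append, mea_cons]
    have hT1 := A1 (fun b => Q b ∨ lt b α) hQα'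
    have hB2 := B2 (fun b => Q b ∨ lt b β) hQβ'dc
    obtain ⟨F6, hF6, hF6m⟩ := mea_filter (lt := lt)
      (Q := fun b => ((Q b ∨ lt b α) ∨ bel lt L₂ b) ∨ bel lt D' b)
      (S := fun b => lt b β ∨ bel lt (E1 ++ (Em ++ E2)) b ∨ bel lt L₂' b) M₂'
    have hmono : mea lt (fun b => (((Q b ∨ lt b α) ∨ bel lt L₂ b) ∨ bel lt D' b)
          ∨ (lt b β ∨ bel lt (E1 ++ (Em ++ E2)) b ∨ bel lt L₂' b)) M₂'
        ≤ mea lt (fun b => (Q b ∨ lt b β) ∨ bel lt ((E1 ++ (Em ++ E2)) ++ L₂') b) M₂' := by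
      apply mea_mono
      intro b hb
      rcases hb with (hb | hb) | hb
      · exact Or.inl (Or.inl (Or.inl (Or.inl hb)))
      · exact Or.inr (Or.inl hb)
      · rcases bel_append.1 hb with hb | hb
        · exact Or.inr (Or.inr (Or.inl hb))
        · exact Or.inr (Or.inr (Or.inr hb))
    have hT2 : ordle lt (mea lt (fun b => ((Q b ∨ lt b α) ∨ bel lt L₂ b) ∨ bel lt D' b) M₂')
        (mea lt (fun b => Q b ∨ lt b β) M₂ + F6) :=
      ordle_trans (ordle_of_le (hF6.trans (add_le_add_left hmono F6)))
        (ordle_add hB2 ordle_refl)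
    have hF6β : ∀ γ ∈ F6, lt γ β ∧ ¬ Q γ ∧ ¬ bel lt D' γ := by
      intro γ hγ
      obtain ⟨hS, hP⟩ := hF6m γ hγ
      have hnQ : ¬ Q γ := fun c => hP (by tauto)
      have hnα : ¬ lt γ α := fun c => hP (by tauto)
      have hnL₂ : ¬ bel lt L₂ γ := fun c => hP (by tauto)
      have hnD' : ¬ bel lt D' γ := fun c => hP (by tauto)
      refine ⟨?_, hnQ, hnD'⟩
      rcases hS with h | h | h
      · exact h
      · rcases kbelE γ h with h | h
        · exact absurd h hnα
        · exact h
      · rcases kbelL₂' γ h with h | h | h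
        · exact absurd h hnL₂
        · exact absurd h hnα
        · exact h
    obtain ⟨Wm, W, hW, hWm, hWp⟩ := shape_bound (lt := lt)
      (Q := fun b => Q b ∨ lt b α) (x := β) hDm
    by_cases hQβ : Q β
    · -- case (i)
      rw [if_pos hQβ, zero_add]
      have hWm0 : Wm = 0 := by
        rcases hWm with h | ⟨_, h, _⟩
        · exact h
        · exact absurd (Or.inl hQβ) h
      have hW0 : W = 0 := by
        rw [Multiset.eq_zero_iff_forall_notMem]
        intro γ hγ
        obtain ⟨hnQ', hor⟩ := hWp γ hγ
        rcases hor with h | ⟨h, _⟩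
        · exact hnQ' (Or.inr (hD1 γ h))
        · rcases hD2 γ h with h2 | h2
          · exact hnQ' (Or.inr h2)
          · exact hnQ' (Or.inl (hQ γ β h2 hQβ))
      have hF60 : F6 = 0 := by
        rw [Multiset.eq_zero_iff_forall_notMem]
        intro γ hγ
        obtain ⟨h1, h2, _⟩ := hF6β γ hγ
        exact h2 (hQ γ β h1 hQβ)
      rw [hF60, add_zero] at hT2
      rw [hWm0, hW0, add_zero] at hW
      have h1 : ordle lt (mea lt (fun b => (Q b ∨ lt b α) ∨ bel lt L₂ b) D') 0 :=
        ordle_of_ordle_le hT1 hW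
      have := ordle_add h1 hT2
      simpa using this
    · rw [if_neg hQβ]
      rcases hDm with hDm0 | hDmβ
      · -- case (ii) : Dm = []
        have hWm0 : Wm = 0 := by
          rcases hWm with h | ⟨_, _, h⟩
          · exact h
          · rw [hDm0] at h; simp at h
        have hWβ : ∀ γ ∈ W, lt γ β := by
          intro γ hγ
          obtain ⟨hnQ', hor⟩ := hWp γ hγ
          rcases hor with h | ⟨h, _⟩
          · exact absurd (hD1 γ h) (fun c => hnQ' (Or.inr c))
          · rcases hD2 γ h with h2 | h2
            · exact absurd h2 (fun c => hnQ' (Or.inr c))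
            · exact h2
        rw [hWm0, zero_add] at hW
        have hchain : ordle lt
            (mea lt (fun b => (Q b ∨ lt b α) ∨ bel lt L₂ b) D'
              + mea lt (fun b => ((Q b ∨ lt b α) ∨ bel lt L₂ b) ∨ bel lt D' b) M₂')
            (W + (mea lt (fun b => Q b ∨ lt b β) M₂ + F6)) :=
          ordle_add (ordle_of_ordle_le hT1 hW) hT2
        have hY : ∀ y ∈ W + F6, ∃ x ∈ ({β} : Multiset I), lt y x := by
          intro y hy
          rcases Multiset.mem_add.1 hy with h | h
          · exact ⟨β, by simp, hWβ y h⟩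
          · exact ⟨β, by simp, (hF6β y h).1⟩
        have hfin := ordle_trans hchain (ordle_key (X := {β})
          (C := mea lt (fun b => Q b ∨ lt b β) M₂) hY (le_of_eq (by abel)))
        rwa [add_comm (mea lt (fun b => Q b ∨ lt b β) M₂) ({β} : Multiset I)] at hfin
      · -- Dm = [β]
        have hW0 : W = 0 := by
          rw [Multiset.eq_zero_iff_forall_notMem]
          intro γ hγ
          obtain ⟨hnQ', hor⟩ := hWp γ hγ
          rcases hor with h | ⟨h, h3⟩
          · exact hnQ' (Or.inr (hD1 γ h))
          · rcases hD2 γ h with h2 | h2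
            · exact hnQ' (Or.inr h2)
            · exact (h3 hDmβ) h2
        have hWle : Wm + W ≤ {β} := by
          rw [hW0, add_zero]
          rcases hWm with h | ⟨h, _, _⟩
          · rw [h]; exact Multiset.zero_le _
          · rw [h]
        by_cases hβD' : β ∈ D'
        · -- case (iii-a)
          have hF60 : F6 = 0 := by
            rw [Multiset.eq_zero_iff_forall_notMem]
            intro γ hγ
            obtain ⟨h1, _, h3⟩ := hF6β γ hγ
            exact h3 ⟨β, hβD', h1⟩
          rw [hF60, add_zero] at hT2
          have h1 : ordle lt (mea lt (fun b => (Q b ∨ lt b α) ∨ bel lt L₂ b) D')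
              ({β} : Multiset I) := ordle_of_ordle_le hT1 (hW.trans hWle)
          exact ordle_add h1 hT2
        · -- case (iii-b)
          obtain ⟨Z, hZ, hZm⟩ := mea_exists_bound (lt := lt)
            (Q := fun b => (Q b ∨ lt b α) ∨ bel lt L₂ b) D'
          have hZβ : ∀ γ ∈ Z, lt γ β := by
            intro γ hγ
            obtain ⟨hγD', hnP⟩ := hZm γ hγ
            have hnQ : ¬ Q γ := fun c => hnP (by tauto)
            have hnα : ¬ lt γ α := fun c => hnP (by tauto)
            have hnL₂ : ¬ bel lt L₂ γ := fun c => hnP (by tauto)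
            rcases C1M γ hγD' with h | h
            · rcases keyD γ h with h | h | h
              · exact absurd (h ▸ hγD') hβD'
              · exact absurd h hnα
              · exact h
            · rcases kbelLD γ h with h | h | h
              · exact absurd h hnL₂
              · exact absurd h hnα
              · exact h
          have hchain : ordle lt
              (mea lt (fun b => (Q b ∨ lt b α) ∨ bel lt L₂ b) D'
                + mea lt (fun b => ((Q b ∨ lt b α) ∨ bel lt L₂ b) ∨ bel lt D' b) M₂')
              (Z + (mea lt (fun b => Q b ∨ lt b β) M₂ + F6)) :=
            ordle_add (ordle_of_le hZ) hT2
          have hY : ∀ y ∈ Z + F6, ∃ x ∈ ({β} : Multiset I), lt y x := by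
            intro y hy
            rcases Multiset.mem_add.1 hy with h | h
            · exact ⟨β, by simp, hZβ y h⟩
            · exact ⟨β, by simp, (hF6β y h).1⟩
          have hfin := ordle_trans hchain (ordle_key (X := {β})
            (C := mea lt (fun b => Q b ∨ lt b β) M₂) hY (le_of_eq (by abel)))
          rwa [add_comm (mea lt (fun b => Q b ∨ lt b β) M₂) ({β} : Multiset I)] at hfin
  · -- invariant (B')
    intro Q hQ
    have hQα' : DC lt (fun b => Q b ∨ lt b α) := DC_or_lt htr hQ α
    have hQβ'dc : DC lt (fun b => Q b ∨ lt b β) := DC_or_lt htr hQ β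
    rw [mea_congr (Q := fun b => Q b ∨ bel lt (β :: M₂) b)
      (Q' := fun b => (Q b ∨ lt b β) ∨ bel lt M₂ b)
      (fun b => by simp only [bel_cons]; tauto) G, mea_cons]
    have hA2 := A2 (fun b => Q b ∨ lt b β) hQβ'dc
    have hB1 := B1 (fun b => Q b ∨ lt b α) hQα'
    have hsplit : mea lt (fun b => Q b ∨ lt b β) ((E1 ++ (Em ++ E2)) ++ L₂')
        = mea lt (fun b => Q b ∨ lt b β) (E1 ++ (Em ++ E2))
          + mea lt (fun b => (Q b ∨ lt b β) ∨ bel lt (E1 ++ (Em ++ E2)) b) L₂' := mea_append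
    obtain ⟨Wm, W, hW, hWm, hWp⟩ := shape_bound (lt := lt) (Q := fun b => Q b ∨ lt b β)
      (x := α) hEm
    have hWE2 : ∀ γ ∈ W, ¬ Q γ ∧ ¬ lt γ β ∧ γ ∈ E2 ∧ (Em = [α] → ¬ lt γ α) := by
      intro γ hγ
      obtain ⟨hnQ', hor⟩ := hWp γ hγ
      rcases hor with h | ⟨h, h3⟩
      · exact absurd (hE1 γ h) (fun c => hnQ' (Or.inr c))
      · exact ⟨fun c => hnQ' (Or.inl c), fun c => hnQ' (Or.inr c), h, h3⟩
    by_cases hQα : Q α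
    · -- case (a)
      rw [if_pos hQα, zero_add]
      have hWm0 : Wm = 0 := by
        rcases hWm with h | ⟨_, h, _⟩
        · exact h
        · exact absurd (Or.inl hQα) h
      have hW0 : W = 0 := by
        rw [Multiset.eq_zero_iff_forall_notMem]
        intro γ hγ
        obtain ⟨hnQ, hnβ, hE2γ, _⟩ := hWE2 γ hγ
        rcases hE2 γ hE2γ with h | h
        · exact hnQ (hQ γ α h hQα)
        · exact hnβ h
      rw [hWm0, hW0, add_zero] at hW
      have hmono : mea lt (fun b => (Q b ∨ lt b β) ∨ bel lt (E1 ++ (Em ++ E2)) b) L₂'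
          ≤ mea lt (fun b => (Q b ∨ lt b α) ∨ bel lt (D1 ++ (Dm ++ D2)) b) L₂' := by
        apply mea_mono
        intro b hb
        rcases hb with (hb | hb) | hb
        · exact Or.inl (Or.inl hb)
        · exact Or.inl (Or.inl (hQ b α hb hQα))
        · rcases kbelD b hb with h | h
          · exact Or.inl (Or.inl (hQ b α h hQα))
          · exact Or.inl (Or.inr h)
      have c1 : ordle lt (mea lt (fun b => (Q b ∨ lt b β) ∨ bel lt M₂ b) G)
          (mea lt (fun b => Q b ∨ lt b β) (E1 ++ (Em ++ E2))
            + mea lt (fun b => (Q b ∨ lt b β) ∨ bel lt (E1 ++ (Em ++ E2)) b) L₂') :=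
        ordle_of_ordle_le hA2 (le_of_eq hsplit)
      have c2 : mea lt (fun b => Q b ∨ lt b β) (E1 ++ (Em ++ E2))
            + mea lt (fun b => (Q b ∨ lt b β) ∨ bel lt (E1 ++ (Em ++ E2)) b) L₂'
          ≤ mea lt (fun b => (Q b ∨ lt b α) ∨ bel lt (D1 ++ (Dm ++ D2)) b) L₂' := by
        have := add_le_add hW hmono
        simpa using this
      exact ordle_trans (ordle_of_ordle_le c1 c2) hB1
    · rw [if_neg hQα]
      rcases hEm with hEm0 | hEmα
      · -- case (c) : Em = []
        have hWm0 : Wm = 0 := by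
          rcases hWm with h | ⟨_, _, h⟩
          · exact h
          · rw [hEm0] at h; simp at h
        have hWα : ∀ γ ∈ W, lt γ α := by
          intro γ hγ
          obtain ⟨_, hnβ, hE2γ, _⟩ := hWE2 γ hγ
          rcases hE2 γ hE2γ with h | h
          · exact h
          · exact absurd h hnβ
        rw [hWm0, zero_add] at hW
        obtain ⟨F8, hF8, hF8m⟩ := mea_filter (lt := lt)
          (Q := fun b => (Q b ∨ lt b β) ∨ bel lt (E1 ++ (Em ++ E2)) b)
          (S := fun b => lt b α) L₂'
        have hmono : mea lt (fun b => ((Q b ∨ lt b β) ∨ bel lt (E1 ++ (Em ++ E2)) b) ∨ lt b α) L₂'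
            ≤ mea lt (fun b => (Q b ∨ lt b α) ∨ bel lt (D1 ++ (Dm ++ D2)) b) L₂' := by
          apply mea_mono
          intro b hb
          rcases hb with (hb | hb) | hb
          · exact Or.inl (Or.inl (Or.inl hb))
          · exact Or.inr hb
          · rcases kbelD b hb with h | h
            · exact Or.inr h
            · exact Or.inl (Or.inl (Or.inr h))
        have c1 : ordle lt (mea lt (fun b => (Q b ∨ lt b β) ∨ bel lt M₂ b) G)
            ((W + F8) + mea lt (fun b => (Q b ∨ lt b α) ∨ bel lt (D1 ++ (Dm ++ D2)) b) L₂') := by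
          refine ordle_of_ordle_le (ordle_of_ordle_le hA2 (le_of_eq hsplit)) ?_
          calc mea lt (fun b => Q b ∨ lt b β) (E1 ++ (Em ++ E2))
              + mea lt (fun b => (Q b ∨ lt b β) ∨ bel lt (E1 ++ (Em ++ E2)) b) L₂'
              ≤ W + (mea lt (fun b => (Q b ∨ lt b α) ∨ bel lt (D1 ++ (Dm ++ D2)) b) L₂' + F8) :=
                add_le_add hW (hF8.trans (add_le_add_left hmono F8))
            _ = (W + F8) + mea lt (fun b => (Q b ∨ lt b α) ∨ bel lt (D1 ++ (Dm ++ D2)) b) L₂' := by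
                abel
        have c2 : ordle lt
            ((W + F8) + mea lt (fun b => (Q b ∨ lt b α) ∨ bel lt (D1 ++ (Dm ++ D2)) b) L₂')
            ((W + F8) + mea lt (fun b => Q b ∨ lt b α) L₂) := ordle_add ordle_refl hB1
        have hY : ∀ y ∈ W + F8, ∃ x ∈ ({α} : Multiset I), lt y x := by
          intro y hy
          rcases Multiset.mem_add.1 hy with h | h
          · exact ⟨α, by simp, hWα y h⟩
          · exact ⟨α, by simp, (hF8m y h).1⟩
        have hfin := ordle_trans (ordle_trans c1 c2) (ordle_key (X := {α})
          (C := mea lt (fun b => Q b ∨ lt b α) L₂) hY (le_of_eq (by abel)))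
        rwa [add_comm (mea lt (fun b => Q b ∨ lt b α) L₂) ({α} : Multiset I)] at hfin
      · -- case (b) : Em = [α]
        have hW0 : W = 0 := by
          rw [Multiset.eq_zero_iff_forall_notMem]
          intro γ hγ
          obtain ⟨_, hnβ, hE2γ, h3⟩ := hWE2 γ hγ
          rcases hE2 γ hE2γ with h | h
          · exact (h3 hEmα) h
          · exact hnβ h
        have hWmle : Wm + W ≤ ({α} : Multiset I) := by
          rw [hW0, add_zero]
          rcases hWm with h | ⟨h, _, _⟩
          · rw [h]; exact Multiset.zero_le _
          · rw [h]
        have hαE : α ∈ E1 ++ (Em ++ E2) := by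
          rw [hEmα]; simp
        have hmono : mea lt (fun b => (Q b ∨ lt b β) ∨ bel lt (E1 ++ (Em ++ E2)) b) L₂'
            ≤ mea lt (fun b => (Q b ∨ lt b α) ∨ bel lt (D1 ++ (Dm ++ D2)) b) L₂' := by
          apply mea_mono
          intro b hb
          rcases hb with (hb | hb) | hb
          · exact Or.inl (Or.inl hb)
          · exact Or.inr ⟨α, hαE, hb⟩
          · rcases kbelD b hb with h | h
            · exact Or.inr ⟨α, hαE, h⟩
            · exact Or.inl (Or.inr h)
        have c1 : ordle lt (mea lt (fun b => (Q b ∨ lt b β) ∨ bel lt M₂ b) G)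
            ({α} + mea lt (fun b => (Q b ∨ lt b α) ∨ bel lt (D1 ++ (Dm ++ D2)) b) L₂') := by
          refine ordle_of_ordle_le (ordle_of_ordle_le hA2 (le_of_eq hsplit)) ?_
          exact add_le_add (hW.trans hWmle) hmono
        exact ordle_trans c1 (ordle_add ordle_refl hB1)
  · -- labels of D' ++ M₂'
    have hbel : ∀ γ, lt γ α ∨ lt γ β ∨ bel lt L₂ γ ∨ bel lt M₂ γ →
        bel lt ((α :: L₂) ++ (β :: M₂)) γ := by
      intro γ h
      rw [bel_append, bel_cons, bel_cons]
      tauto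
    intro γ hγ
    rcases List.mem_append.1 hγ with h | h
    · rcases C1M γ h with h2 | h2
      · rcases keyD γ h2 with h3 | h3 | h3
        · exact Or.inl (by rw [h3]; exact List.mem_cons_self)
        · exact Or.inr (hbel γ (Or.inl h3))
        · exact Or.inr (hbel γ (Or.inr (Or.inl h3)))
      · rcases kbelLD γ h2 with h3 | h3 | h3
        · exact Or.inr (hbel γ (Or.inr (Or.inr (Or.inl h3))))
        · exact Or.inr (hbel γ (Or.inl h3))
        · exact Or.inr (hbel γ (Or.inr (Or.inl h3)))
    · rcases C2L γ h with h2 | h2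
      · exact Or.inl (List.mem_cons_of_mem β h2)
      · rcases bel_append.1 h2 with h3 | h3
        · exact Or.inr (hbel γ (Or.inr (Or.inr (Or.inr h3))))
        · rcases bel_append.1 h3 with h4 | h4
          · rcases kbelE γ h4 with h5 | h5
            · exact Or.inr (hbel γ (Or.inl h5))
            · exact Or.inr (hbel γ (Or.inr (Or.inl h5)))
          · rcases kbelL₂' γ h4 with h5 | h5 | h5
            · exact Or.inr (hbel γ (Or.inr (Or.inr (Or.inl h5))))
            · exact Or.inr (hbel γ (Or.inl h5))
            · exact Or.inr (hbel γ (Or.inr (Or.inl h5)))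
  · -- labels of G
    have hbel : ∀ γ, lt γ α ∨ lt γ β ∨ bel lt L₂ γ ∨ bel lt M₂ γ →
        bel lt ((α :: L₂) ++ (β :: M₂)) γ := by
      intro γ h
      rw [bel_append, bel_cons, bel_cons]
      tauto
    intro γ hγ
    rcases C2M γ hγ with h | h
    · rcases List.mem_append.1 h with h2 | h2
      · rcases keyE γ h2 with h3 | h3 | h3
        · exact Or.inl (by rw [h3]; exact List.mem_cons_self)
        · exact Or.inr (hbel γ (Or.inl h3))
        · exact Or.inr (hbel γ (Or.inr (Or.inl h3)))
      · rcases kL₂' γ h2 with h3 | h3 | h3 | h3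
        · exact Or.inl (List.mem_cons_of_mem α h3)
        · exact Or.inr (hbel γ (Or.inr (Or.inr (Or.inl h3))))
        · exact Or.inr (hbel γ (Or.inl h3))
        · exact Or.inr (hbel γ (Or.inr (Or.inl h3)))
    · rcases bel_append.1 h with h3 | h3
      · exact Or.inr (hbel γ (Or.inr (Or.inr (Or.inr h3))))
      · rcases bel_append.1 h3 with h4 | h4
        · rcases kbelE γ h4 with h5 | h5
          · exact Or.inr (hbel γ (Or.inl h5))
          · exact Or.inr (hbel γ (Or.inr (Or.inl h5)))
        · rcases kbelL₂' γ h4 with h5 | h5 | h5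
          · exact Or.inr (hbel γ (Or.inr (Or.inr (Or.inl h5))))
          · exact Or.inr (hbel γ (Or.inl h5))
          · exact Or.inr (hbel γ (Or.inr (Or.inl h5)))

end DD

/-- van Oostrom's decreasing diagrams theorem: if every local
peak of the union of an `I`-indexed family of relations (with a well-founded
order on `I`) is decreasing, then the union is confluent. -/
theorem decreasing_diagrams {A I : Type} (r : I → A → A → Prop) (lt : I → I → Prop)
    (hwf : WellFounded lt)
    (hdec : ∀ (α β : I) (s t u : A), r α s t → r β s u →
      ∃ t₁ t₂ v u₁ u₂ : A,
        Relation.ReflTransGen (fun a b => ∃ γ, lt γ α ∧ r γ a b) t t₁ ∧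
        Relation.ReflGen (r β) t₁ t₂ ∧
        Relation.ReflTransGen (fun a b => ∃ γ, (lt γ α ∨ lt γ β) ∧ r γ a b) t₂ v ∧
        Relation.ReflTransGen (fun a b => ∃ γ, lt γ β ∧ r γ a b) u u₁ ∧
        Relation.ReflGen (r α) u₁ u₂ ∧
        Relation.ReflTransGen (fun a b => ∃ γ, (lt γ α ∨ lt γ β) ∧ r γ a b) u₂ v) :
    ∀ s t u : A,
      Relation.ReflTransGen (fun a b => ∃ γ, r γ a b) s t →
      Relation.ReflTransGen (fun a b => ∃ γ, r γ a b) s u →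
      ∃ v : A, Relation.ReflTransGen (fun a b => ∃ γ, r γ a b) t v ∧
        Relation.ReflTransGen (fun a b => ∃ γ, r γ a b) u v := by
  intro s t u hst hsu
  set lt' := Relation.TransGen lt with hlt'
  have htr : Transitive lt' := fun a b c h1 h2 => h1.trans h2
  have hwf' : WellFounded (DD.ords lt') := (hwf.transGen.cutExpand).transGen
  have hdec' : ∀ (α β : I) (s t u : A), r α s t → r β s u →
      ∃ (v : A) (D1 Dm D2 E1 Em E2 : List I),
       DD.Seq r (D1 ++ (Dm ++ D2)) t v ∧ DD.Seq r (E1 ++ (Em ++ E2)) u v ∧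
       (∀ γ ∈ D1, lt' γ α) ∧ (Dm = [] ∨ Dm = [β]) ∧ (∀ γ ∈ D2, lt' γ α ∨ lt' γ β) ∧
       (∀ γ ∈ E1, lt' γ β) ∧ (Em = [] ∨ Em = [α]) ∧ (∀ γ ∈ E2, lt' γ α ∨ lt' γ β) := by
    intro α β s' t' u' hα hβ
    obtain ⟨t₁, t₂, v, u₁, u₂, h1, h2, h3, h4, h5, h6⟩ := hdec α β s' t' u' hα hβ
    obtain ⟨D1, hD1s, hD1p⟩ := DD.rtg_to_seq (p := fun γ => lt' γ α)
      (Relation.ReflTransGen.mono (fun _ _ hx => by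
        obtain ⟨γ, hγ, hr⟩ := hx
        exact ⟨γ, Relation.TransGen.single hγ, hr⟩) _ _ h1)
    obtain ⟨Dm, hDms, hDmp⟩ := DD.rg_to_seq h2
    obtain ⟨D2, hD2s, hD2p⟩ := DD.rtg_to_seq (p := fun γ => lt' γ α ∨ lt' γ β)
      (Relation.ReflTransGen.mono (fun _ _ hx => by
        obtain ⟨γ, hγ, hr⟩ := hx
        exact ⟨γ, hγ.imp Relation.TransGen.single Relation.TransGen.single, hr⟩) _ _ h3)
    obtain ⟨E1, hE1s, hE1p⟩ := DD.rtg_to_seq (p := fun γ => lt' γ β)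
      (Relation.ReflTransGen.mono (fun _ _ hx => by
        obtain ⟨γ, hγ, hr⟩ := hx
        exact ⟨γ, Relation.TransGen.single hγ, hr⟩) _ _ h4)
    obtain ⟨Em, hEms, hEmp⟩ := DD.rg_to_seq h5
    obtain ⟨E2, hE2s, hE2p⟩ := DD.rtg_to_seq (p := fun γ => lt' γ α ∨ lt' γ β)
      (Relation.ReflTransGen.mono (fun _ _ hx => by
        obtain ⟨γ, hγ, hr⟩ := hx
        exact ⟨γ, hγ.imp Relation.TransGen.single Relation.TransGen.single, hr⟩) _ _ h6)
    exact ⟨v, D1, Dm, D2, E1, Em, E2, hD1s.append (hDms.append hD2s),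
      hE1s.append (hEms.append hE2s), hD1p, hDmp, hD2p, hE1p, hEmp, hE2p⟩
  obtain ⟨L, hLseq, -⟩ := DD.rtg_to_seq (r := r) (p := fun _ => True)
    (Relation.ReflTransGen.mono (fun _ _ hx => by
      obtain ⟨γ, hr⟩ := hx
      exact ⟨γ, trivial, hr⟩) _ _ hst)
  obtain ⟨M, hMseq, -⟩ := DD.rtg_to_seq (r := r) (p := fun _ => True)
    (Relation.ReflTransGen.mono (fun _ _ hx => by
      obtain ⟨γ, hr⟩ := hx
      exact ⟨γ, trivial, hr⟩) _ _ hsu)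
  obtain ⟨v, Ms, Ls, hMs, hLs, -, -, -, -⟩ :=
    DD.main r lt' htr hwf' hdec' _ L M s t u hLseq hMseq rfl
  exact ⟨v, hMs.to_rtg, hLs.to_rtg⟩
end

section
/- Let L be a layer system, R weakly layered according to L, and fix a rank r such that R is confluent on all terms of rank at most r. Let s, t₁,…,tₙ and u₁,…,uₙ be terms of rank at most r (foreign terms). If sᵢ →*_R tᵢ and sᵢ →*_R uᵢ for all i, then there exist terms v₁,…,vₙ of rank at most r such that tᵢ →*_R vᵢ and uᵢ →*_R vᵢ for all i, and moreover both (t₁,…,tₙ) ∝ (v₁,…,vₙ) and (u₁,…,uₙ) ∝ (v₁,…,vₙ), where (a₁,…,aₙ) ∝ (b₁,…,bₙ) means aᵢ = aⱼ implies bᵢ = bⱼ for all i, j. -/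
section Aux
variable {F V : Type}

/-- Structural version of `CLe`. -/
inductive Sle : Ctx F V → Ctx F V → Prop
  | hole (C : Ctx F V) : Sle hole C
  | var (x : V) : Sle (.var x) (.var x)
  | app (f : F ⊕ Unit) {Cs Ds : List (Ctx F V)} :
      List.Forall₂ Sle Cs Ds → Sle (.app f Cs) (.app f Ds)

theorem sle_refl : (C : Ctx F V) → Sle C C
  | .var x => .var x
  | .app f ts => .app f (List.forall₂_same.mpr fun t ht => sle_refl t)
  decreasing_by · simp only [Tm.app.sizeOf_spec]; have := List.sizeOf_lt_of_mem ‹_›; omega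

theorem forall₂_trans_aux {Cs Ds Es : List (Ctx F V)}
    (h : ∀ d ∈ Ds, ∀ {c e : Ctx F V}, Sle c d → Sle d e → Sle c e)
    (h1 : List.Forall₂ Sle Cs Ds) (h2 : List.Forall₂ Sle Ds Es) :
    List.Forall₂ Sle Cs Es := by
  induction h1 generalizing Es with
  | nil => cases h2; exact .nil
  | @cons c d Cs' Ds' hcd _ ih =>
    cases h2 with
    | cons hde h2' =>
      exact .cons (h d (by simp) hcd hde) (ih (fun d' hd' => h d' (by simp [hd'])) h2')

theorem sle_trans : ∀ (D : Ctx F V) {C E : Ctx F V}, Sle C D → Sle D E → Sle C E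
  | D, C, E, h1, h2 => by
    cases h1 with
    | hole => exact .hole E
    | var x => exact h2
    | @app f Cs Ds hCD =>
      cases h2 with
      | hole => cases hCD; exact .hole E
      | app _ hDE =>
        exact .app f (forall₂_trans_aux (fun d hd {c e} hc he => sle_trans d hc he) hCD hDE)
  termination_by D => sizeOf D
  decreasing_by · subst_vars; simp only [Tm.app.sizeOf_spec]; have := List.sizeOf_lt_of_mem hd; omega

theorem forall₂_imp_mem {R S : Ctx F V → Ctx F V → Prop} :
    ∀ {l₁ l₂ : List (Ctx F V)}, List.Forall₂ R l₁ l₂ →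
      (∀ a ∈ l₁, ∀ b, R a b → S a b) → List.Forall₂ S l₁ l₂ := by
  intro l₁ l₂ h
  induction h with
  | nil => intro; exact .nil
  | cons hab _ ih =>
    intro h'
    exact .cons (h' _ (by simp) _ hab) (ih fun a ha b hr => h' a (by simp [ha]) b hr)

theorem cle_of_sle : ∀ {C D : Ctx F V}, Sle C D → CLe C D
  | C, D, h => by
    cases h with
    | hole => exact .hole D
    | var x => exact .refl _
    | @app f Cs Ds h =>
      exact .mono f (forall₂_imp_mem h (fun a ha b hr => cle_of_sle hr))
  termination_by C D h => sizeOf C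
  decreasing_by simp only [Tm.app.sizeOf_spec]; have := List.sizeOf_lt_of_mem ha; omega

theorem sle_of_cle {C D : Ctx F V} (h : CLe C D) : Sle C D := by
  refine CLe.rec (motive_1 := fun C D _ => Sle C D)
    (motive_2 := fun Cs Ds _ => List.Forall₂ Sle Cs Ds) ?_ ?_ ?_ ?_ ?_ ?_ h
  · exact sle_refl
  · exact fun C => .hole C
  · exact fun _ _ h1 h2 => sle_trans _ h1 h2
  · intro f Cs Ds _ ih; exact .app f ih
  · exact .nil
  · intro a b l₁ l₂ _ _ ih1 ih2; exact .cons ih1 ih2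

end Aux
section Aux2
variable {F V : Type}

theorem app_eq_hole_iff {f : F ⊕ Unit} {ts : List (Ctx F V)} :
    (Tm.app f ts = (hole : Ctx F V)) ↔ f = Sum.inr () ∧ ts = [] := by
  rw [hole]
  constructor
  · intro h; injection h with h1 h2; exact ⟨h1, h2⟩
  · rintro ⟨rfl, rfl⟩; rfl

open Classical in
/-- Head weight. -/
noncomputable def hd (C : Ctx F V) : Nat := if C = hole then 0 else 1

theorem hd_eq_zero {C : Ctx F V} (h : C = hole) : hd C = 0 := by
  rw [hd, if_pos h]

theorem hd_eq_one {C : Ctx F V} (h : C ≠ hole) : hd C = 1 := by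
  rw [hd, if_neg h]

theorem hd_congr {C D : Ctx F V} (h : C = hole ↔ D = hole) : hd C = hd D := by
  by_cases hC : C = hole
  · rw [hd_eq_zero hC, hd_eq_zero (h.mp hC)]
  · rw [hd_eq_one hC, hd_eq_one (fun hD => hC (h.mpr hD))]

/-- Weight: number of non-hole nodes. -/
noncomputable def wt : Ctx F V → Nat
  | .var _ => 1
  | .app f ts => hd (Tm.app f ts) + (ts.attach.map fun t => wt t.1).sum
  decreasing_by · simp only [Tm.app.sizeOf_spec]; have := List.sizeOf_lt_of_mem t.2; omega

theorem wt_app (f : F ⊕ Unit) (ts : List (Ctx F V)) :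
    wt (.app f ts) = hd (Tm.app f ts) + (ts.map wt).sum := by
  rw [wt]
  exact congrArg (hd (Tm.app f ts) + List.sum ·) (List.attach_map_val (l := ts) (f := wt))

theorem wt_var (x : V) : wt (Tm.var x : Ctx F V) = 1 := by rw [wt]

theorem wt_hole : wt (hole : Ctx F V) = 0 := by
  have h : (hole : Ctx F V) = Tm.app (Sum.inr ()) [] := rfl
  rw [h, wt_app, ← h, hd_eq_zero rfl]; rfl

theorem wt_pos {C : Ctx F V} (h : C ≠ hole) : 1 ≤ wt C := by
  match C with
  | .var x => rw [wt_var]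
  | .app f ts => rw [wt_app, hd_eq_one h]; omega

theorem sum_le_sum_forall₂ {l₁ l₂ : List (Ctx F V)}
    (h : List.Forall₂ (fun a b => wt a ≤ wt b) l₁ l₂) :
    (l₁.map wt).sum ≤ (l₂.map wt).sum := by
  induction h with
  | nil => simp
  | cons hab _ ih => simp only [List.map_cons, List.sum_cons]; omega

theorem wt_mono : ∀ {C D : Ctx F V}, Sle C D → wt C ≤ wt D
  | C, D, h => by
    cases h with
    | hole => rw [wt_hole]; omega
    | var x => omega
    | @app f Cs Ds h =>
      rw [wt_app, wt_app]
      have h2 : (Cs.map wt).sum ≤ (Ds.map wt).sum :=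
        sum_le_sum_forall₂ (forall₂_imp_mem h (fun a ha b hr => wt_mono hr))
      have hiff : Cs = [] ↔ Ds = [] := by
        constructor <;> intro he <;> subst he <;> cases h <;> rfl
      have hif : hd (Tm.app f Cs : Ctx F V) = hd (Tm.app f Ds) := by
        apply hd_congr; rw [app_eq_hole_iff, app_eq_hole_iff, hiff]
      rw [hif]
      exact Nat.add_le_add_left h2 _
  termination_by C D h => sizeOf C
  decreasing_by · simp only [Tm.app.sizeOf_spec]; have := List.sizeOf_lt_of_mem ha; omega

theorem sum_lt_aux : ∀ {Cs Ds : List (Ctx F V)}, List.Forall₂ Sle Cs Ds → Cs ≠ Ds →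
    (∀ d ∈ Ds, ∀ c, Sle c d → c ≠ d → wt c < wt d) →
    (Cs.map wt).sum < (Ds.map wt).sum := by
  intro Cs Ds h
  induction h with
  | nil => intro h; exact absurd rfl h
  | @cons c d Cs' Ds' hcd htl ih =>
    intro hne hrec
    by_cases hc : c = d
    · subst hc
      have hne' : Cs' ≠ Ds' := fun he => hne (by rw [he])
      have := ih hne' (fun d hd => hrec d (by simp [hd]))
      simp only [List.map_cons, List.sum_cons]; omega
    · have h1 : wt c < wt d := hrec d (by simp) c hcd hc
      have h2 : (Cs'.map wt).sum ≤ (Ds'.map wt).sum :=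
        sum_le_sum_forall₂ (forall₂_imp_mem htl (fun a _ b hr => wt_mono hr))
      simp only [List.map_cons, List.sum_cons]; omega

theorem wt_strict : ∀ {C D : Ctx F V}, Sle C D → C ≠ D → wt C < wt D
  | C, D, h, hne => by
    cases h with
    | hole =>
      have := wt_pos (fun he => hne he.symm)
      rw [wt_hole]; omega
    | var x => exact absurd rfl hne
    | @app f Cs Ds h =>
      have hne' : Cs ≠ Ds := fun he => hne (by rw [he])
      have hsum : (Cs.map wt).sum < (Ds.map wt).sum :=
        sum_lt_aux h hne' (fun d hmem c hc hcd => wt_strict hc hcd)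
      rw [wt_app, wt_app]
      have hiff : Cs = [] ↔ Ds = [] := by
        constructor <;> intro he <;> subst he <;> cases h <;> rfl
      have hif : hd (Tm.app f Cs : Ctx F V) = hd (Tm.app f Ds) := by
        apply hd_congr; rw [app_eq_hole_iff, app_eq_hole_iff, hiff]
      rw [hif]
      exact Nat.add_lt_add_left hsum _
  termination_by C D h hne => sizeOf D
  decreasing_by all_goals subst_vars; simp only [Tm.app.sizeOf_spec]; have := List.sizeOf_lt_of_mem hmem; omega

theorem forall₂_set_finite : ∀ (ts : List (Ctx F V)),
    (∀ t ∈ ts, {C : Ctx F V | Sle C t}.Finite) →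
    {l : List (Ctx F V) | List.Forall₂ Sle l ts}.Finite := by
  intro ts
  induction ts with
  | nil =>
    intro _
    have : {l : List (Ctx F V) | List.Forall₂ Sle l []} = {[]} := by
      ext l; simp [List.forall₂_nil_right_iff]
    rw [this]; exact Set.finite_singleton _
  | cons t ts ih =>
    intro h
    have : {l : List (Ctx F V) | List.Forall₂ Sle l (t :: ts)} =
        Set.image2 List.cons {C | Sle C t} {l | List.Forall₂ Sle l ts} := by
      ext l
      simp only [Set.mem_setOf_eq, List.forall₂_cons_right_iff, Set.mem_image2]
      constructor
      · rintro ⟨a, u, h1, h2, rfl⟩; exact ⟨a, h1, u, h2, rfl⟩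
      · rintro ⟨a, h1, u, h2, rfl⟩; exact ⟨a, u, h1, h2, rfl⟩
    rw [this]
    exact Set.Finite.image2 _ (h t (by simp)) (ih (fun t' ht' => h t' (by simp [ht'])))

theorem sle_finite : ∀ (t : Ctx F V), {C : Ctx F V | Sle C t}.Finite
  | .var x => by
    apply Set.Finite.subset ((Set.finite_singleton (Tm.var x)).insert hole)
    intro C h
    cases h with
    | hole => exact Set.mem_insert _ _
    | var => exact Set.mem_insert_of_mem _ rfl
  | .app f ts => by
    have hfin : {l : List (Ctx F V) | List.Forall₂ Sle l ts}.Finite :=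
      forall₂_set_finite ts (fun t ht => sle_finite t)
    apply Set.Finite.subset ((hfin.image (fun l => Tm.app f l)).insert hole)
    intro C h
    cases h with
    | hole => exact Set.mem_insert _ _
    | app _ h => exact Set.mem_insert_of_mem _ ⟨_, h, rfl⟩
  decreasing_by · simp only [Tm.app.sizeOf_spec]; have := List.sizeOf_lt_of_mem ht; omega

/-- Every noHole term has a max-top, which is not the hole. -/
theorem maxtop_exists {𝕃 : Set (Ctx F V)} (hLS : LayerSystem 𝕃) {t : Ctx F V}
    (ht : noHole t) : ∃ M, MaxTopOf 𝕃 t M ∧ M ≠ hole := by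
  obtain ⟨L', hL', hL'ne⟩ := hLS.L1 t ht
  have hfin : {L : Ctx F V | TopOf 𝕃 t L}.Finite :=
    Set.Finite.subset (sle_finite t) (fun L hL => sle_of_cle hL.2)
  obtain ⟨M, hM, hmax⟩ := Set.Finite.exists_maximalFor wt _ hfin ⟨L', hL'⟩
  have hMax : MaxTopOf 𝕃 t M := by
    refine ⟨hM, fun L hL hML => ?_⟩
    have h1 : wt M ≤ wt L := wt_mono (sle_of_cle hML)
    have h2 : wt M = wt L := le_antisymm h1 (hmax hL h1)
    by_contra hne
    exact absurd h2 (Nat.ne_of_lt (wt_strict (sle_of_cle hML) (fun he => hne he.symm)))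
  refine ⟨M, hMax, fun he => ?_⟩
  subst he
  exact hL'ne (hMax.2 L' hL' (CLe.hole L'))

end Aux2
section Aux3
variable {F V : Type}

theorem sub_append : ∀ (p : List Nat) (t : Tm F V) (q : List Nat),
    Tm.sub (p ++ q) t = (Tm.sub p t).bind (Tm.sub q) := by
  intro p
  induction p with
  | nil => intro t q; rfl
  | cons i p ih =>
    intro t q
    match t with
    | .var x => rfl
    | .app f ts =>
      show (ts[i]?).bind (Tm.sub (p ++ q)) = ((ts[i]?).bind (Tm.sub p)).bind (Tm.sub q)
      cases ts[i]? with
      | none => rfl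
      | some ti => exact ih ti q

theorem sub_size [SizeOf F] [SizeOf V] : ∀ (p : List Nat) {t tp : Tm F V} {i : Nat},
    Tm.sub (i :: p) t = some tp → sizeOf tp < sizeOf t := by
  intro p
  induction p with
  | nil =>
    intro t tp i h
    match t with
    | .var x => exact absurd h (by simp [Tm.sub])
    | .app f ts =>
      have : ts[i]? = some tp := by
        revert h
        show (ts[i]?).bind (Tm.sub []) = some tp → _
        cases ts[i]? with
        | none => intro h; exact absurd h (by simp)
        | some ti => intro h; injection h with h; rw [h]
      have hm := List.sizeOf_lt_of_mem (List.mem_of_getElem? this)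
      simp only [Tm.app.sizeOf_spec]; omega
  | cons j p ih =>
    intro t tp i h
    match t with
    | .var x => exact absurd h (by simp [Tm.sub])
    | .app f ts =>
      revert h
      show (ts[i]?).bind (Tm.sub (j :: p)) = some tp → _
      cases hg : ts[i]? with
      | none => intro h; exact absurd h (by simp)
      | some ti =>
        intro h
        have h1 : sizeOf tp < sizeOf ti := ih h
        have hm := List.sizeOf_lt_of_mem (List.mem_of_getElem? hg)
        simp only [Tm.app.sizeOf_spec]; omega

theorem noHole_sub {t tp : Ctx F V} {p : List Nat} (ht : noHole t)
    (h : Tm.sub p t = some tp) : noHole tp := by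
  intro q hq
  have := sub_append p t q
  rw [h] at this
  exact ht (p ++ q) (by rw [this]; exact hq)

theorem forall₂_get? {R : Ctx F V → Ctx F V → Prop} :
    ∀ {l₁ l₂ : List (Ctx F V)} {i : Nat} {a : Ctx F V}, List.Forall₂ R l₁ l₂ →
      l₁[i]? = some a → ∃ b, l₂[i]? = some b ∧ R a b := by
  intro l₁ l₂ i a h
  induction h generalizing i with
  | nil => intro h; exact absurd h (by simp)
  | @cons c d l₁' l₂' hcd _ ih =>
    intro hg
    match i with
    | 0 => injection hg with hg; subst hg; exact ⟨d, rfl, hcd⟩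
    | Nat.succ i => exact ih hg

theorem sle_sub : ∀ (p : List Nat) {C D Cp : Ctx F V}, Sle C D →
    Tm.sub p C = some Cp → ∃ Dp, Tm.sub p D = some Dp ∧ Sle Cp Dp := by
  intro p
  induction p with
  | nil =>
    intro C D Cp h hs
    injection hs with hs; subst hs
    exact ⟨D, rfl, h⟩
  | cons i p ih =>
    intro C D Cp h hs
    cases h with
    | hole => exact absurd hs (by simp [hole, Tm.sub])
    | var x => exact absurd hs (by simp [Tm.sub])
    | @app f Cs Ds h =>
      revert hs
      show (Cs[i]?).bind (Tm.sub p) = some Cp → _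
      cases hg : Cs[i]? with
      | none => intro hs; exact absurd hs (by simp)
      | some Ci =>
        intro hs
        obtain ⟨Di, hDi, hCDi⟩ := forall₂_get? h hg
        obtain ⟨Dp, hDp, hle⟩ := ih hCDi hs
        refine ⟨Dp, ?_, hle⟩
        show (Ds[i]?).bind (Tm.sub p) = some Dp
        rw [hDi]
        exact hDp

theorem pos_finite : ∀ (t : Tm F V), {p : List Nat | (Tm.sub p t).isSome}.Finite
  | .var x => by
    apply Set.Finite.subset (Set.finite_singleton ([] : List Nat))
    intro p hp
    match p with
    | [] => rfl
    | i :: p => exact absurd hp (by simp [Tm.sub])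
  | .app f ts => by
    have hfin : ∀ (i : Fin ts.length),
        {p : List Nat | (Tm.sub p ts[i.1]).isSome}.Finite :=
      fun i => pos_finite ts[i.1]
    apply Set.Finite.subset
      (Set.Finite.insert [] (Set.finite_iUnion
        (fun i : Fin ts.length => (hfin i).image (fun q => i.1 :: q))))
    intro p hp
    match p with
    | [] => exact Set.mem_insert _ _
    | i :: q =>
      apply Set.mem_insert_of_mem
      revert hp
      show ((ts[i]?).bind (Tm.sub q)).isSome → _
      cases hg : ts[i]? with
      | none => intro hp; exact absurd hp (by simp)
      | some ti =>
        intro hp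
        rw [List.getElem?_eq_some_iff] at hg
        obtain ⟨hlt, hget⟩ := hg
        refine Set.mem_iUnion.mpr ⟨⟨i, hlt⟩, ⟨q, ?_, rfl⟩⟩
        show (Tm.sub q ts[i]).isSome
        rw [hget]
        exact hp
  decreasing_by · have := List.sizeOf_lt_of_mem (List.getElem_mem i.2); simp only [Tm.app.sizeOf_spec]; omega

/-- Every noHole term has a rank. -/
theorem rank_exists {𝕃 : Set (Ctx F V)} (hLS : LayerSystem 𝕃) :
    ∀ (t : Ctx F V), noHole t → ∃ n, HasRank 𝕃 t n
  | t, ht => by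
    obtain ⟨M, hM, hMne⟩ := maxtop_exists hLS ht
    have hsleMt : Sle M t := sle_of_cle hM.1.2
    have halien : ∀ p, Tm.sub p M = some hole →
        ∃ tp, Tm.sub p t = some tp ∧ ∃ k, HasRank 𝕃 tp k := by
      intro p hp
      obtain ⟨tp, htp, _⟩ := sle_sub p hsleMt hp
      have hpne : p ≠ [] := by
        intro he; subst he
        injection hp with hp
        exact hMne hp
      have hsize : sizeOf tp < sizeOf t := by
        match p, hpne with
        | i :: p', _ => exact sub_size p' htp
      exact ⟨tp, htp, rank_exists hLS tp (noHole_sub ht htp)⟩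
    classical
    set rk : List Nat → Nat := fun p =>
      if h : ∃ k, ∃ tp, Tm.sub p t = some tp ∧ HasRank 𝕃 tp k then h.choose else 0 with hrk
    have hrkspec : ∀ p tp, Tm.sub p M = some hole → Tm.sub p t = some tp →
        HasRank 𝕃 tp (rk p) := by
      intro p tp hp htp
      obtain ⟨tp', htp', k, hk⟩ := halien p hp
      rw [htp] at htp'; injection htp' with htp'; subst htp'
      have hex : ∃ k, ∃ tp', Tm.sub p t = some tp' ∧ HasRank 𝕃 tp' k := ⟨k, tp, htp, hk⟩
      rw [hrk]
      simp only [dif_pos hex]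
      obtain ⟨tp'', htp'', hk''⟩ := hex.choose_spec
      rw [htp] at htp''; injection htp'' with htp''; subst htp''
      exact hk''
    have hHP : {p : List Nat | Tm.sub p M = some hole}.Finite := by
      apply Set.Finite.subset (pos_finite M)
      intro p hp
      simp only [Set.mem_setOf_eq] at hp ⊢
      rw [hp]; rfl
    set n : Nat := hHP.toFinset.sup rk with hn
    refine ⟨n + 1, HasRank.intro t M n rk hM hrkspec ?_ ?_⟩
    · intro p hp
      exact Finset.le_sup (f := rk) (hHP.mem_toFinset.mpr hp)
    · rcases Finset.eq_empty_or_nonempty hHP.toFinset with he | hne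
      · left; rw [hn, he]; rfl
      · right
        obtain ⟨p, hpmem, hsup⟩ := Finset.exists_mem_eq_sup hHP.toFinset hne rk
        have hp : Tm.sub p M = some hole := hHP.mem_toFinset.mp hpmem
        obtain ⟨tp, htp, _⟩ := halien p hp
        exact ⟨p, tp, hp, htp, hsup.symm⟩
  termination_by t ht => sizeOf t
  decreasing_by all_goals subst_vars; omega

end Aux3
section Aux4
variable {F V : Type}

theorem subst_app (σ : V → Tm F V) (f : F) (ts : List (Tm F V)) :
    Tm.subst σ (.app f ts) = .app f (ts.map (Tm.subst σ)) := by
  rw [Tm.subst]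
  congr 1
  exact List.attach_map_val (l := ts) (f := Tm.subst σ)

theorem vars_app (f : F) (ts : List (Tm F V)) :
    Tm.vars (.app f ts) = ts.flatMap Tm.vars := by
  rw [Tm.vars]
  rw [List.flatMap_def, List.flatMap_def]
  congr 1
  exact List.attach_map_val (l := ts) (f := Tm.vars)

theorem vars_subterm (σ : V → Tm F V) :
    ∀ (l : Tm F V) {v : V}, v ∈ l.vars → ∃ q, Tm.sub q (Tm.subst σ l) = some (σ v)
  | .var x, v, hv => by
    have : v = x := by simpa [Tm.vars] using hv
    subst this
    exact ⟨[], by rw [Tm.subst]; rfl⟩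
  | .app f ts, v, hv => by
    rw [vars_app] at hv
    obtain ⟨t, ht, hv⟩ := List.mem_flatMap.mp hv
    obtain ⟨i, hi⟩ := List.getElem?_of_mem ht
    obtain ⟨q, hq⟩ := vars_subterm σ t hv
    refine ⟨i :: q, ?_⟩
    rw [subst_app]
    show ((ts.map (Tm.subst σ))[i]?).bind (Tm.sub q) = some (σ v)
    rw [List.getElem?_map, hi]
    exact hq
  decreasing_by · simp only [Tm.app.sizeOf_spec]; have := List.sizeOf_lt_of_mem ht; omega

theorem sub_of_get? {f : F ⊕ Unit} {ts : List (Ctx F V)} {i : Nat} {ti : Ctx F V}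
    (h : ts[i]? = some ti) : Tm.sub [i] (Tm.app f ts) = some ti := by
  show (ts[i]?).bind (Tm.sub []) = some ti
  rw [h]; rfl

theorem noHole_subst : ∀ (l : Ctx F V) (σ : V → Ctx F V), noHole l →
    (∀ v ∈ l.vars, noHole (σ v)) → noHole (Tm.subst σ l)
  | .var x, σ, _, hσ => by rw [Tm.subst]; exact hσ x (by simp [Tm.vars])
  | .app f ts, σ, hl, hσ => by
    rw [subst_app]
    intro p hp
    match p with
    | [] =>
      injection hp with hp
      rw [app_eq_hole_iff] at hp
      have hts : ts = [] := by simpa using hp.2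
      exact hl [] (by rw [hp.1, hts]; rfl)
    | i :: q =>
      revert hp
      show (((ts.map (Tm.subst σ))[i]?).bind (Tm.sub q)) = some hole → False
      rw [List.getElem?_map]
      cases hg : ts[i]? with
      | none => intro hp; exact absurd hp (by simp)
      | some ti =>
        intro hp
        have hti : noHole ti := noHole_sub hl (sub_of_get? hg)
        have hvars : ∀ v ∈ ti.vars, noHole (σ v) := by
          intro v hv
          refine hσ v ?_
          rw [vars_app]
          exact List.mem_flatMap.mpr ⟨ti, List.mem_of_getElem? hg, hv⟩
        exact noHole_subst ti σ hti hvars q hp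
  decreasing_by · simp only [Tm.app.sizeOf_spec]; have := List.sizeOf_lt_of_mem (List.mem_of_getElem? hg); omega

theorem noHole_repl : ∀ (p : List Nat) (x u : Ctx F V), noHole x → noHole u →
    noHole (Tm.repl p x u) := by
  intro p
  induction p with
  | nil => intro x u _ hu; exact hu
  | cons i p ih =>
    intro x u hx hu
    match x with
    | .var y => exact hx
    | .app f ts =>
      rw [Tm.repl]
      cases hg : ts[i]? with
      | none => simpa [hg] using hx
      | some ti =>
        simp only [hg]
        intro q hq
        match q with
        | [] =>
          injection hq with hq
          rw [app_eq_hole_iff] at hq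
          have : ts.set i (Tm.repl p ti u) = [] := hq.2
          rw [List.set_eq_nil_iff] at this
          subst this
          exact absurd hg (by simp)
        | j :: q' =>
          revert hq
          show (((ts.set i (Tm.repl p ti u))[j]?).bind (Tm.sub q')) = some hole → False
          by_cases hij : i = j
          · subst hij
            rw [show (ts.set i (Tm.repl p ti u))[i]? = (fun _ => Tm.repl p ti u) <$> ts[i]?
                 from List.getElem?_set_self', hg]
            intro hq
            have hti : noHole ti := noHole_sub hx (sub_of_get? hg)
            exact ih ti u hti hu q' hq
          · rw [List.getElem?_set_ne (fun h => hij h)]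
            intro hq
            apply hx (j :: q')
            show ((ts[j]?).bind (Tm.sub q')) = some hole
            exact hq

theorem step_noHole {R : Set (Rule (F ⊕ Unit) V)}
    (hR : ∀ ρ ∈ R, WfRule ρ ∧ noHole ρ.lhs ∧ noHole ρ.rhs)
    {x y : Ctx F V} (hx : noHole x) (hstep : Step R x y) : noHole y := by
  obtain ⟨ρ, hρ, p, σ, hsub, rfl⟩ := hstep
  obtain ⟨hwf, hlhs, hrhs⟩ := hR ρ hρ
  have hxp : noHole (Tm.subst σ ρ.lhs) := noHole_sub hx hsub
  have hσ : ∀ v ∈ ρ.rhs.vars, noHole (σ v) := by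
    intro v hv
    obtain ⟨q, hq⟩ := vars_subterm σ ρ.lhs (hwf.2 v hv)
    exact noHole_sub hxp hq
  exact noHole_repl p x _ hx (noHole_subst ρ.rhs σ hrhs hσ)

end Aux4
/-- balancing joins of foreign sequences. -/
theorem balance_foreign_sequences (F V : Type) [Countable V] [Infinite V]
    (𝕃 : Set (Ctx F V)) (R : Set (Rule (F ⊕ Unit) V))
    (hLS : LayerSystem 𝕃) (hW : WeaklyLayered R 𝕃)
    (hR : ∀ ρ ∈ R, WfRule ρ ∧ noHole ρ.lhs ∧ noHole ρ.rhs)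
    (r : Nat)
    (hconf : ConfluentOn R {t : Ctx F V | noHole t ∧ ∃ k ≤ r, HasRank 𝕃 t k})
    (hmono : ∀ (s t : Ctx F V) (m n : Nat), noHole s → Step R s t →
      HasRank 𝕃 s m → HasRank 𝕃 t n → n ≤ m)
    (n : Nat) (s t u : Fin n → Ctx F V)
    (hforeign : ∀ i, noHole (s i) ∧ ∃ k ≤ r, HasRank 𝕃 (s i) k)
    (hst : ∀ i, Steps R (s i) (t i)) (hsu : ∀ i, Steps R (s i) (u i)) :
    ∃ v : Fin n → Ctx F V,
      (∀ i, (noHole (v i) ∧ ∃ k ≤ r, HasRank 𝕃 (v i) k) ∧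
        Steps R (t i) (v i) ∧ Steps R (u i) (v i)) ∧
      (∀ i j, t i = t j → v i = v j) ∧
      (∀ i j, u i = u j → v i = v j) := by
  classical
  set T : Set (Ctx F V) := {t : Ctx F V | noHole t ∧ ∃ k ≤ r, HasRank 𝕃 t k} with hT
  -- T is closed under single steps
  have Tstep : ∀ x y : Ctx F V, x ∈ T → Step R x y → y ∈ T := by
    rintro x y ⟨hx, k, hkr, hrk⟩ hstep
    have hy : noHole y := step_noHole hR hx hstep
    obtain ⟨m, hm⟩ := rank_exists hLS y hy
    exact ⟨hy, m, le_trans (hmono x y k m hx hstep hrk hm) hkr, hm⟩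
  have Tsteps : ∀ x y : Ctx F V, x ∈ T → Steps R x y → y ∈ T := by
    intro x y hx h
    induction h with
    | refl => exact hx
    | tail _ hstep ih => exact Tstep _ _ ih hstep
  have hTs : ∀ i, s i ∈ T := hforeign
  have hTt : ∀ i, t i ∈ T := fun i => Tsteps _ _ (hTs i) (hst i)
  have hTu : ∀ i, u i ∈ T := fun i => Tsteps _ _ (hTs i) (hsu i)
  -- joinability
  set J : Ctx F V → Ctx F V → Prop :=
    fun a b => ∃ w, Steps R a w ∧ Steps R b w with hJ
  have Jrefl : ∀ a, J a a := fun a => ⟨a, .refl, .refl⟩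
  have Jsymm : ∀ a b, J a b → J b a := by rintro a b ⟨w, h1, h2⟩; exact ⟨w, h2, h1⟩
  have Jtrans : ∀ a b c, b ∈ T → J a b → J b c → J a c := by
    rintro a b c hb ⟨w1, ha1, hb1⟩ ⟨w2, hb2, hc2⟩
    obtain ⟨w, hw1, hw2⟩ := hconf b hb w1 w2 hb1 hb2
    exact ⟨w, ha1.trans hw1, hc2.trans hw2⟩
  have Jtu : ∀ i, J (t i) (u i) := by
    intro i
    obtain ⟨w, h1, h2⟩ := hconf (s i) (hTs i) (t i) (u i) (hst i) (hsu i)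
    exact ⟨w, h1, h2⟩
  set rel : Fin n → Fin n → Prop := fun i j => t i = t j ∨ u i = u j with hrel
  have key1 : ∀ i j, Relation.EqvGen rel i j → J (t i) (t j) := by
    intro i j h
    induction h with
    | rel i j hij =>
      rcases hij with h | h
      · rw [h]; exact Jrefl _
      · exact Jtrans _ _ _ (hTu i) (Jtu i) (h ▸ Jsymm _ _ (Jtu j))
    | refl i => exact Jrefl _
    | symm i j _ ih => exact Jsymm _ _ ih
    | trans i j k _ _ ih1 ih2 => exact Jtrans _ _ _ (hTt j) ih1 ih2
  -- common reduct for a list of related indices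
  have key2 : ∀ (i : Fin n) (l : List (Fin n)), ∃ w, Steps R (t i) w ∧
      ∀ j ∈ l, Relation.EqvGen rel i j → Steps R (t j) w ∧ Steps R (u j) w := by
    intro i l
    induction l with
    | nil => exact ⟨t i, .refl, by simp⟩
    | cons j l ih =>
      obtain ⟨w, hiw, hl⟩ := ih
      by_cases hej : Relation.EqvGen rel i j
      · obtain ⟨a, hta, htja⟩ := key1 i j hej
        obtain ⟨b, hwb, hab⟩ := hconf (t i) (hTt i) w a hiw hta
        obtain ⟨c, htjc, huc⟩ := Jtu j
        obtain ⟨w', hbw', hcw'⟩ := hconf (t j) (hTt j) b c (htja.trans hab) htjc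
        refine ⟨w', hiw.trans (hwb.trans hbw'), ?_⟩
        intro j' hj' hej'
        rcases List.mem_cons.mp hj' with rfl | hj'
        · exact ⟨(htja.trans hab).trans hbw', huc.trans hcw'⟩
        · obtain ⟨h1, h2⟩ := hl j' hj' hej'
          exact ⟨h1.trans (hwb.trans hbw'), h2.trans (hwb.trans hbw')⟩
      · refine ⟨w, hiw, ?_⟩
        intro j' hj' hej'
        rcases List.mem_cons.mp hj' with rfl | hj'
        · exact absurd hej' hej
        · exact hl j' hj' hej'
  -- the class of an index
  set cls : Fin n → Set (Ctx F V) :=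
    fun i => {x | ∃ j, Relation.EqvGen rel i j ∧ (x = t j ∨ x = u j)} with hcls
  have cls_congr : ∀ i j, Relation.EqvGen rel i j → cls i = cls j := by
    intro i j hij
    ext x
    constructor
    · rintro ⟨j', hj', hx⟩
      exact ⟨j', Relation.EqvGen.trans _ _ _ (Relation.EqvGen.symm _ _ hij) hj', hx⟩
    · rintro ⟨j', hj', hx⟩
      exact ⟨j', Relation.EqvGen.trans _ _ _ hij hj', hx⟩
  set P : Set (Ctx F V) → Prop := fun S => ∃ w, ∀ x ∈ S, Steps R x w with hP
  set W : Set (Ctx F V) → Ctx F V := fun S => if h : P S then h.choose else hole with hW'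
  have Wspec : ∀ S, P S → ∀ x ∈ S, Steps R x (W S) := by
    intro S h
    rw [hW']
    simp only [dif_pos h]
    exact h.choose_spec
  have hPi : ∀ i, P (cls i) := by
    intro i
    obtain ⟨w, hiw, hw⟩ := key2 i (List.finRange n)
    refine ⟨w, ?_⟩
    rintro x ⟨j, hij, hx | hx⟩
    · subst hx; exact (hw j (List.mem_finRange j) hij).1
    · subst hx; exact (hw j (List.mem_finRange j) hij).2
  refine ⟨fun i => W (cls i), ?_, ?_, ?_⟩
  · intro i
    have hti : t i ∈ cls i := ⟨i, Relation.EqvGen.refl i, Or.inl rfl⟩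
    have hui : u i ∈ cls i := ⟨i, Relation.EqvGen.refl i, Or.inr rfl⟩
    have h1 : Steps R (t i) (W (cls i)) := Wspec _ (hPi i) _ hti
    have h2 : Steps R (u i) (W (cls i)) := Wspec _ (hPi i) _ hui
    exact ⟨Tsteps _ _ (hTt i) h1, h1, h2⟩
  · intro i j hij
    show W (cls i) = W (cls j)
    rw [cls_congr i j (Relation.EqvGen.rel i j (Or.inl hij))]
  · intro i j hij
    show W (cls i) = W (cls j)
    rw [cls_congr i j (Relation.EqvGen.rel i j (Or.inr hij))]
end
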